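/- Let ∥ be a Clifford-like parallelism. An F-linear bijection β : H → H preserves ∥ if and only if it preserves the left Clifford parallelism ∥ℓ; in other words, the group of F-linear transformations preserving ∥ coincides with the group of F-linear transformations preserving ∥ℓ. -/
import Mathlib


variable (F H : Type*) [Field F] [DivisionRing H] [Algebra F H]

/-- A *line* of the projective space `ℙ(H_F)`: a 2-dimensional `F`-subspace of `H`. -/
abbrev Line := {M : Submodule F H // Module.finrank F M = 2}

/-- `M ∥ℓ N` : there is `g ≠ 0` with `N = g·M`. -/
def LeftPar (M N : Submodule F H) : Prop :=
  ∃ g : H, g ≠ 0 ∧ (N : Set H) = (fun m => g * m) '' (M : Set H)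

/-- `M ∥r N` : there is `g ≠ 0` with `N = M·g`. -/
def RightPar (M N : Submodule F H) : Prop :=
  ∃ g : H, g ≠ 0 ∧ (N : Set H) = (fun m => m * g) '' (M : Set H)

/-- The left parallel class `Sℓ(M) = {N | N ∥ℓ M}`. -/
def leftClass (M : Line F H) : Set (Line F H) := {N | LeftPar F H N.1 M.1}

/-- The right parallel class `Sr(M) = {N | N ∥r M}`. -/
def rightClass (M : Line F H) : Set (Line F H) := {N | RightPar F H N.1 M.1}

/-- The `∥`-class `S(M) = {N | N ∥ M}`. -/
def parClass (par : Line F H → Line F H → Prop) (M : Line F H) : Set (Line F H) :=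
  {N | par N M}

/-- A parallelism: an equivalence relation on lines such that for every `x ≠ 0`
and every line `M` there is exactly one line `N` with `x ∈ N` and `N ∥ M`. -/
def IsParallelism (par : Line F H → Line F H → Prop) : Prop :=
  Equivalence par ∧
    ∀ x : H, x ≠ 0 → ∀ M : Line F H, ∃! N : Line F H, x ∈ N.1 ∧ par N M

/-- A Clifford-like parallelism: every `∥`-class is a left or a right parallel class. -/
def IsCliffordLike (par : Line F H → Line F H → Prop) : Prop :=
  IsParallelism F H par ∧
    ∀ M : Line F H,
      parClass F H par M = leftClass F H M ∨ parClass F H par M = rightClass F H M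

/-- The star `𝒜` of lines through `F·1`, i.e. the lines containing `1`. -/
def starLines : Set (Line F H) := {L | (1 : H) ∈ L.1}

/-- The set `ℱ` of lines of `𝒜` whose `∥`-class is a left parallel class. -/
def calF (par : Line F H → Line F H → Prop) : Set (Line F H) :=
  {L | (1 : H) ∈ L.1 ∧ parClass F H par L = leftClass F H L}

/-- A semilinear bijection of `H` (over some field automorphism of `F`). -/
def IsSemilinear (β : H → H) : Prop :=
  Function.Bijective β ∧ (∀ x y : H, β (x + y) = β x + β y) ∧
    ∃ σ : F ≃+* F, ∀ (a : F) (x : H), β (a • x) = σ a • β x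

/-- `β` preserves the parallelism `par`: for all lines `M, N`,
`M ∥ N ↔ β(M) ∥ β(N)`, where `β(M)` denotes the line whose carrier is `β '' M`. -/
def Preserves (β : H → H) (par : Line F H → Line F H → Prop) : Prop :=
  ∀ M N M' N' : Line F H,
    (M'.1 : Set H) = β '' (M.1 : Set H) →
    (N'.1 : Set H) = β '' (N.1 : Set H) →
    (par M N ↔ par M' N')

/-- The image `β(𝒢)` of a set of lines under `β`. -/
def imageLines (β : H → H) (G : Set (Line F H)) : Set (Line F H) :=
  {L' | ∃ L ∈ G, (L'.1 : Set H) = β '' (L.1 : Set H)}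

/-- The centre of `H` is exactly `F·1`. -/
def CenterEqF : Prop :=
  ∀ z : H, (∀ x : H, z * x = x * z) ↔ ∃ a : F, z = algebraMap F H a

/-- Ring automorphism of `H`, as a plain function. -/
def IsRingAutFn (α : H → H) : Prop :=
  Function.Bijective α ∧ (∀ x y : H, α (x + y) = α x + α y) ∧ α 1 = 1 ∧
    ∀ x y : H, α (x * y) = α x * α y

/-- Ring antiautomorphism of `H`, as a plain function. -/
def IsRingAntiAutFn (α : H → H) : Prop :=
  Function.Bijective α ∧ (∀ x y : H, α (x + y) = α x + α y) ∧ α 1 = 1 ∧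
    ∀ x y : H, α (x * y) = α y * α x

namespace CLP
variable {F H : Type*} [Field F] [DivisionRing H] [Algebra F H]

lemma mem_fone {x : H} : x ∈ Submodule.span F ({1} : Set H) ↔ ∃ a : F, x = a • 1 := by
  rw [Submodule.mem_span_singleton]
  exact ⟨fun ⟨a, ha⟩ => ⟨a, ha.symm⟩, fun ⟨a, ha⟩ => ⟨a, ha.symm⟩⟩

lemma algebraMap_mem_fone (a : F) : algebraMap F H a ∈ Submodule.span F ({1} : Set H) := by
  rw [mem_fone]; exact ⟨a, Algebra.algebraMap_eq_smul_one a⟩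

lemma smul_one_central (a : F) (x : H) : (a • (1:H)) * x = x * (a • 1) := by
  rw [smul_mul_assoc, mul_smul_comm, one_mul, mul_one]

lemma exists_noncomm (hcenter : CenterEqF F H) (hdim : Module.finrank F H = 4) :
    ∃ x y : H, x * y ≠ y * x := by
  by_contra h
  push_neg at h
  have htop : (Submodule.span F ({1} : Set H)) = ⊤ := by
    rw [Submodule.eq_top_iff']
    intro z
    obtain ⟨a, ha⟩ := (hcenter z).1 (fun x => h z x)
    rw [ha]; exact algebraMap_mem_fone a
  have h1 : Module.finrank F (Submodule.span F ({1} : Set H)) = 1 :=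
    finrank_span_singleton one_ne_zero
  rw [htop, finrank_top, hdim] at h1
  norm_num at h1

lemma fd_of_dim4 (hdim : Module.finrank F H = 4) : FiniteDimensional F H :=
  FiniteDimensional.of_finrank_pos (by omega)

/-- chain bound : 3 ≤ finrank of any submodule containing 1, u, u*u when those are "independent" -/
lemma three_le_finrank (hdim : Module.finrank F H = 4)
    {u : H} (hu : u ∉ Submodule.span F ({1} : Set H))
    (hsq : u*u ∉ Submodule.span F ({1, u} : Set H))
    {W : Submodule F H} (h1 : (1:H) ∈ W) (h2 : u ∈ W) (h3 : u*u ∈ W) :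
    3 ≤ Module.finrank F W := by
  have hFD : FiniteDimensional F H := fd_of_dim4 hdim
  have c1 : Submodule.span F ({1} : Set H) < Submodule.span F ({1, u} : Set H) := by
    refine lt_of_le_of_ne (Submodule.span_mono (by simp)) ?_
    intro he
    exact hu (he ▸ Submodule.subset_span (by simp))
  have c2 : Submodule.span F ({1, u} : Set H) < Submodule.span F ({1, u, u*u} : Set H) := by
    refine lt_of_le_of_ne (Submodule.span_mono (by intro x hx; simp at hx; rcases hx with h|h <;> simp [h])) ?_
    intro he
    exact hsq (he ▸ Submodule.subset_span (by simp))
  have c3 : Submodule.span F ({1, u, u*u} : Set H) ≤ W := by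
    rw [Submodule.span_le]
    intro x hx
    simp only [Set.mem_insert_iff, Set.mem_singleton_iff] at hx
    rcases hx with h|h|h <;> simp [h, h1, h2, h3]
  have f1 : 1 ≤ Module.finrank F (Submodule.span F ({1} : Set H)) := by
    rw [finrank_span_singleton (one_ne_zero : (1:H) ≠ 0)]
  have f2 := Submodule.finrank_lt_finrank_of_lt c1
  have f3 := Submodule.finrank_lt_finrank_of_lt c2
  have f4 := Submodule.finrank_mono c3
  omega
end CLP
namespace CLP
variable {F H : Type*} [Field F] [DivisionRing H] [Algebra F H]

lemma inv_mem_subalg (hdim : Module.finrank F H = 4) {A : Subalgebra F H}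
    {w : H} (hw : w ∈ A) (hw0 : w ≠ 0) : w⁻¹ ∈ A := by
  have hFD : FiniteDimensional F H := fd_of_dim4 hdim
  have hint : IsIntegral F w := Algebra.IsIntegral.isIntegral w
  have hc0 : (minpoly F w).coeff 0 ≠ 0 := minpoly.coeff_zero_ne_zero hint hw0
  have haev : Polynomial.aeval w (minpoly F w) = 0 := minpoly.aeval F w
  have hdecomp : Polynomial.X * (minpoly F w).divX + Polynomial.C ((minpoly F w).coeff 0)
      = minpoly F w := Polynomial.X_mul_divX_add _
  set v := Polynomial.aeval w (minpoly F w).divX with hv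
  have hvA : v ∈ A := by
    have : v ∈ Algebra.adjoin F ({w} : Set H) := Polynomial.aeval_mem_adjoin_singleton F w
    exact Algebra.adjoin_le (by simpa using hw) this
  have hmul : w * v = algebraMap F H (-((minpoly F w).coeff 0)) := by
    have h := haev
    conv_lhs at h => rw [← hdecomp]
    rw [map_add, map_mul, Polynomial.aeval_X, Polynomial.aeval_C] at h
    rw [map_neg]
    exact eq_neg_of_add_eq_zero_left h
  have hkey : w * ((-((minpoly F w).coeff 0))⁻¹ • v) = 1 := by
    rw [mul_smul_comm, hmul, Algebra.algebraMap_eq_smul_one, smul_smul,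
      inv_mul_cancel₀ (by simpa using hc0), one_smul]
  have h2 : w⁻¹ = (-((minpoly F w).coeff 0))⁻¹ • v := inv_eq_of_mul_eq_one_right hkey
  rw [h2]
  exact A.smul_mem hvA _

lemma sq_mem_span (hcenter : CenterEqF F H) (hdim : Module.finrank F H = 4)
    {u : H} (hu : u ∉ Submodule.span F ({1} : Set H)) :
    u * u ∈ Submodule.span F ({1, u} : Set H) := by
  have hFD : FiniteDimensional F H := fd_of_dim4 hdim
  by_contra hsq
  have huA : u ∈ Algebra.adjoin F ({u} : Set H) := Algebra.subset_adjoin rfl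
  set A := Algebra.adjoin F ({u} : Set H) with hA
  have h3le : 3 ≤ Module.finrank F (Subalgebra.toSubmodule A) :=
    three_le_finrank hdim hu hsq ((Subalgebra.mem_toSubmodule A).2 (one_mem A))
      ((Subalgebra.mem_toSubmodule A).2 huA) ((Subalgebra.mem_toSubmodule A).2 (mul_mem huA huA))
  have hle4 : Module.finrank F (Subalgebra.toSubmodule A) ≤ 4 := by
    have := Submodule.finrank_le (Subalgebra.toSubmodule A)
    omega
  by_cases htop : (Subalgebra.toSubmodule A) = ⊤
  · -- H is commutative : contradiction
    obtain ⟨x, y, hxy⟩ := exists_noncomm hcenter hdim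
    apply hxy
    have hx : x ∈ A := by rw [← Subalgebra.mem_toSubmodule, htop]; trivial
    have hy : y ∈ A := by rw [← Subalgebra.mem_toSubmodule, htop]; trivial
    rw [hA, Algebra.adjoin_singleton_eq_range_aeval] at hx hy
    obtain ⟨p, hp⟩ := hx
    obtain ⟨q, hq⟩ := hy
    rw [← hp, ← hq, ← map_mul, ← map_mul, mul_comm p q]
  · -- A is a proper subalgebra of dimension ≥ 3 : dimension contradiction
    obtain ⟨x, hx⟩ : ∃ x : H, x ∉ Subalgebra.toSubmodule A := by
      by_contra hc
      push_neg at hc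
      exact htop (Submodule.eq_top_iff'.2 hc)
    have hx0 : x ≠ 0 := fun h => hx (h ▸ (Subalgebra.toSubmodule A).zero_mem)
    -- right multiplication by x
    set e : H ≃ₗ[F] H := LinearEquiv.ofBijective (LinearMap.mulRight F x)
      ⟨fun a b hab => mul_right_cancel₀ hx0 hab,
       fun y => ⟨y * x⁻¹, by simp [LinearMap.mulRight_apply, mul_assoc, inv_mul_cancel₀ hx0]⟩⟩ with he
    have hecoe : ∀ z : H, e z = z * x := fun z => rfl
    set Ax := Submodule.map (e : H →ₗ[F] H) (Subalgebra.toSubmodule A) with hAx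
    have hfr : Module.finrank F Ax = Module.finrank F (Subalgebra.toSubmodule A) := by
      rw [hAx]
      exact LinearEquiv.finrank_map_eq e _
    have hinf : (Subalgebra.toSubmodule A) ⊓ Ax = ⊥ := by
      rw [Submodule.eq_bot_iff]
      rintro z ⟨hz1, hz2⟩
      obtain ⟨a, ha, haz⟩ := hz2
      by_contra hz0
      have ha0 : a ≠ 0 := by
        rintro rfl
        have haz' : (0:H) * x = z := haz
        rw [zero_mul] at haz'
        exact hz0 haz'.symm
      apply hx
      have haz' : a * x = z := haz
      have : x = a⁻¹ * z := by
        rw [← haz', ← mul_assoc, inv_mul_cancel₀ ha0, one_mul]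
      rw [this, Subalgebra.mem_toSubmodule]
      exact mul_mem (inv_mem_subalg hdim ((Subalgebra.mem_toSubmodule A).1 ha) ha0)
        ((Subalgebra.mem_toSubmodule A).1 hz1)
    have hkey := Submodule.finrank_sup_add_finrank_inf_eq (Subalgebra.toSubmodule A) Ax
    rw [hinf] at hkey
    have hsup := Submodule.finrank_le ((Subalgebra.toSubmodule A) ⊔ Ax)
    rw [finrank_bot, add_zero] at hkey
    omega

end CLP
namespace CLP
variable {F H : Type*} [Field F] [DivisionRing H] [Algebra F H]

lemma exists_gen (hdim : Module.finrank F H = 4) {K : Submodule F H}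
    (hK2 : Module.finrank F K = 2) (hK1 : (1:H) ∈ K) :
    ∃ u : H, u ∈ K ∧ u ∉ Submodule.span F ({1} : Set H) ∧ K = Submodule.span F ({1, u} : Set H) := by
  have hFD : FiniteDimensional F H := fd_of_dim4 hdim
  obtain ⟨u, huK, hu⟩ : ∃ u, u ∈ K ∧ u ∉ Submodule.span F ({1} : Set H) := by
    by_contra hc
    push_neg at hc
    have hle : K ≤ Submodule.span F ({1} : Set H) := fun z hz => hc z hz
    have := Submodule.finrank_mono (R := F) (M := H) hle
    rw [hK2, finrank_span_singleton (one_ne_zero : (1:H) ≠ 0)] at this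
    omega
  refine ⟨u, huK, hu, ?_⟩
  have hle : Submodule.span F ({1, u} : Set H) ≤ K := by
    rw [Submodule.span_le]
    intro x hx
    rcases hx with h | h
    · simpa [h] using hK1
    · simp at h; rw [h]; exact huK
  have hlt : Submodule.span F ({1} : Set H) < Submodule.span F ({1, u} : Set H) := by
    refine lt_of_le_of_ne (Submodule.span_mono (by simp)) ?_
    intro he
    exact hu (he ▸ Submodule.subset_span (by simp))
  have h1 : Module.finrank F (Submodule.span F ({1} : Set H)) = 1 :=
    finrank_span_singleton one_ne_zero
  have h2 := Submodule.finrank_lt_finrank_of_lt hlt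
  exact (Submodule.eq_of_le_of_finrank_le hle (by omega)).symm

lemma mem_span_one {x : H} {u : H} :
    x ∈ Submodule.span F ({1, u} : Set H) ↔ ∃ a b : F, x = a • 1 + b • u := by
  rw [Submodule.mem_span_pair]
  constructor
  · rintro ⟨a, b, h⟩; exact ⟨a, b, h.symm⟩
  · rintro ⟨a, b, h⟩; exact ⟨a, b, h.symm⟩

lemma line_mul_mem (hcenter : CenterEqF F H) (hdim : Module.finrank F H = 4)
    {K : Submodule F H} (hK2 : Module.finrank F K = 2) (hK1 : (1:H) ∈ K)
    {x y : H} (hx : x ∈ K) (hy : y ∈ K) : x * y ∈ K := by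
  obtain ⟨u, huK, hu, hKs⟩ := exists_gen hdim hK2 hK1
  have hsq : u * u ∈ K := hKs ▸ sq_mem_span hcenter hdim hu
  rw [hKs] at hx
  rw [mem_span_one] at hx
  obtain ⟨a, b, rfl⟩ := hx
  have h1 : u * y ∈ K := by
    rw [hKs, mem_span_one] at hy
    obtain ⟨c, d, rfl⟩ := hy
    rw [mul_add, mul_smul_comm, mul_smul_comm, mul_one]
    exact add_mem (K.smul_mem _ huK) (K.smul_mem _ hsq)
  rw [add_mul, smul_mul_assoc, smul_mul_assoc, one_mul]
  exact add_mem (K.smul_mem _ hy) (K.smul_mem _ h1)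

lemma line_comm (hcenter : CenterEqF F H) (hdim : Module.finrank F H = 4)
    {K : Submodule F H} (hK2 : Module.finrank F K = 2) (hK1 : (1:H) ∈ K)
    {x y : H} (hx : x ∈ K) (hy : y ∈ K) : x * y = y * x := by
  obtain ⟨u, huK, hu, hKs⟩ := exists_gen hdim hK2 hK1
  rw [hKs, mem_span_one] at hx hy
  obtain ⟨a, b, rfl⟩ := hx
  obtain ⟨c, d, rfl⟩ := hy
  simp only [add_mul, mul_add, smul_mul_assoc, mul_smul_comm, one_mul, mul_one, smul_smul]
  module

lemma line_inv_mem (hcenter : CenterEqF F H) (hdim : Module.finrank F H = 4)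
    {K : Submodule F H} (hK2 : Module.finrank F K = 2) (hK1 : (1:H) ∈ K)
    {x : H} (hx : x ∈ K) (hx0 : x ≠ 0) : x⁻¹ ∈ K := by
  by_cases hxF : x ∈ Submodule.span F ({1} : Set H)
  · rw [mem_fone] at hxF
    obtain ⟨a, rfl⟩ := hxF
    have ha : a ≠ 0 := by rintro rfl; simp at hx0
    have : (a • (1:H))⁻¹ = a⁻¹ • 1 := by
      rw [Algebra.smul_def, Algebra.smul_def, mul_one, mul_one, map_inv₀]
    rw [this]
    exact K.smul_mem _ hK1
  · have hsq : x * x ∈ Submodule.span F ({1, x} : Set H) := sq_mem_span hcenter hdim hxF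
    rw [mem_span_one] at hsq
    obtain ⟨s, t, hst⟩ := hsq
    have hs : s ≠ 0 := by
      rintro rfl
      rw [zero_smul, zero_add] at hst
      have : (x - t • 1) * x = 0 := by
        rw [sub_mul, smul_mul_assoc, one_mul, hst, sub_self]
      rcases mul_eq_zero.1 this with h | h
      · apply hxF
        rw [mem_fone]
        exact ⟨t, by linear_combination (norm := module) h⟩
      · exact hx0 h
    have hkey : x * (s⁻¹ • (x - t • 1)) = 1 := by
      rw [mul_smul_comm, mul_sub, mul_smul_comm, mul_one, hst]
      have : s • (1:H) + t • x - t • x = s • 1 := by module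
      rw [this, smul_smul, inv_mul_cancel₀ hs, one_smul]
    rw [inv_eq_of_mul_eq_one_right hkey]
    exact K.smul_mem _ (sub_mem hx (K.smul_mem _ hK1))

lemma line_smul_set (hcenter : CenterEqF F H) (hdim : Module.finrank F H = 4)
    {K : Submodule F H} (hK2 : Module.finrank F K = 2) (hK1 : (1:H) ∈ K)
    {k : H} (hk : k ∈ K) (hk0 : k ≠ 0) :
    (fun m => k * m) '' (K : Set H) = (K : Set H) := by
  apply Set.Subset.antisymm
  · rintro _ ⟨m, hm, rfl⟩
    exact line_mul_mem hcenter hdim hK2 hK1 hk hm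
  · intro m hm
    exact ⟨k⁻¹ * m, line_mul_mem hcenter hdim hK2 hK1
      (line_inv_mem hcenter hdim hK2 hK1 hk hk0) hm, by
        show k * (k⁻¹ * m) = m
        rw [← mul_assoc, mul_inv_cancel₀ hk0, one_mul]⟩

lemma line_set_smul (hcenter : CenterEqF F H) (hdim : Module.finrank F H = 4)
    {K : Submodule F H} (hK2 : Module.finrank F K = 2) (hK1 : (1:H) ∈ K)
    {k : H} (hk : k ∈ K) (hk0 : k ≠ 0) :
    (fun m => m * k) '' (K : Set H) = (K : Set H) := by
  apply Set.Subset.antisymm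
  · rintro _ ⟨m, hm, rfl⟩
    exact line_mul_mem hcenter hdim hK2 hK1 hm hk
  · intro m hm
    exact ⟨m * k⁻¹, line_mul_mem hcenter hdim hK2 hK1 hm
      (line_inv_mem hcenter hdim hK2 hK1 hk hk0), by
        show m * k⁻¹ * k = m
        rw [mul_assoc, inv_mul_cancel₀ hk0, mul_one]⟩

end CLP
namespace CLP
variable {F H : Type*} [Field F] [DivisionRing H] [Algebra F H]

lemma smul_one_eq_zero {a : F} (h : a • (1:H) = 0) : a = 0 := by
  by_contra ha
  have : (1:H) = 0 := by
    have := congrArg (fun z => a⁻¹ • z) h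
    simpa [smul_smul, inv_mul_cancel₀ ha] using this
  exact one_ne_zero this

lemma pair_zero {w : H} (hw : w ∉ Submodule.span F ({1} : Set H))
    {a b : F} (h : a • (1:H) + b • w = 0) : a = 0 ∧ b = 0 := by
  have hb : b = 0 := by
    by_contra hb
    apply hw
    rw [mem_fone]
    refine ⟨-(b⁻¹ * a), ?_⟩
    have : b • w = -(a • (1:H)) := by linear_combination (norm := module) h
    have := congrArg (fun z => b⁻¹ • z) this
    simp only [smul_smul, inv_mul_cancel₀ hb, one_smul] at this
    rw [this]
    module
  refine ⟨?_, hb⟩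
  rw [hb, zero_smul, add_zero] at h
  exact smul_one_eq_zero h

lemma not_mem_fone_ne_zero {w : H} (hw : w ∉ Submodule.span F ({1} : Set H)) : w ≠ 0 := by
  rintro rfl; exact hw (Submodule.zero_mem _)

lemma finrank_span_one_pair (hdim : Module.finrank F H = 4) {w : H}
    (hw : w ∉ Submodule.span F ({1} : Set H)) :
    Module.finrank F (Submodule.span F ({1, w} : Set H)) = 2 := by
  have hFD : FiniteDimensional F H := fd_of_dim4 hdim
  have hlt : Submodule.span F ({1} : Set H) < Submodule.span F ({1, w} : Set H) := by
    refine lt_of_le_of_ne (Submodule.span_mono (by simp)) ?_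
    intro he
    exact hw (he ▸ Submodule.subset_span (by simp))
  have h1 : Module.finrank F (Submodule.span F ({1} : Set H)) = 1 :=
    finrank_span_singleton one_ne_zero
  have h2 := Submodule.finrank_lt_finrank_of_lt hlt
  have hsplit : Submodule.span F ({1, w} : Set H)
      = Submodule.span F ({1} : Set H) ⊔ Submodule.span F ({w} : Set H) := by
    rw [← Submodule.span_insert]
  have hsum := Submodule.finrank_sup_add_finrank_inf_eq
    (Submodule.span F ({1} : Set H)) (Submodule.span F ({w} : Set H))
  rw [h1, finrank_span_singleton (not_mem_fone_ne_zero hw)] at hsum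
  rw [hsplit] at h2 ⊢
  omega

lemma exists_not_fone (hdim : Module.finrank F H = 4) :
    ∃ u : H, u ∉ Submodule.span F ({1} : Set H) := by
  by_contra hc
  push_neg at hc
  have : Submodule.span F ({1} : Set H) = ⊤ := Submodule.eq_top_iff'.2 hc
  have h1 : Module.finrank F (Submodule.span F ({1} : Set H)) = 1 :=
    finrank_span_singleton one_ne_zero
  rw [this, finrank_top, hdim] at h1
  norm_num at h1

/-- any element commuting with `u ∉ F` lies in `F + Fu` -/
lemma centralizer_line (hcenter : CenterEqF F H) (hdim : Module.finrank F H = 4)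
    {u v : H} (hu : u ∉ Submodule.span F ({1} : Set H)) (hcomm : u * v = v * u) :
    v ∈ Submodule.span F ({1, u} : Set H) := by
  have hFD : FiniteDimensional F H := fd_of_dim4 hdim
  by_contra hv
  set K := Submodule.span F ({1, u} : Set H) with hKdef
  have hK2 : Module.finrank F K = 2 := finrank_span_one_pair hdim hu
  have hK1 : (1:H) ∈ K := Submodule.subset_span (by simp)
  have huK : u ∈ K := Submodule.subset_span (by simp)
  have hv0 : v ≠ 0 := by rintro rfl; exact hv (Submodule.zero_mem _)
  set e : H ≃ₗ[F] H := LinearEquiv.ofBijective (LinearMap.mulRight F v)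
    ⟨fun a b hab => mul_right_cancel₀ hv0 hab,
     fun y => ⟨y * v⁻¹, by simp [LinearMap.mulRight_apply, mul_assoc, inv_mul_cancel₀ hv0]⟩⟩ with he
  set Kv := Submodule.map (e : H →ₗ[F] H) K with hKv
  have hfr : Module.finrank F Kv = 2 := by rw [hKv, LinearEquiv.finrank_map_eq e K, hK2]
  have hinf : K ⊓ Kv = ⊥ := by
    rw [Submodule.eq_bot_iff]
    rintro z ⟨hz1, hz2⟩
    obtain ⟨a, ha, haz⟩ := hz2
    have haz' : a * v = z := haz
    by_contra hz0
    have ha0 : a ≠ 0 := by rintro rfl; rw [zero_mul] at haz'; exact hz0 haz'.symm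
    apply hv
    have : v = a⁻¹ * z := by rw [← haz', ← mul_assoc, inv_mul_cancel₀ ha0, one_mul]
    rw [this]
    exact line_mul_mem hcenter hdim hK2 hK1 (line_inv_mem hcenter hdim hK2 hK1 ha ha0) hz1
  have hsum := Submodule.finrank_sup_add_finrank_inf_eq K Kv
  rw [hinf, finrank_bot, add_zero, hK2, hfr] at hsum
  have htop : K ⊔ Kv = ⊤ := Submodule.eq_top_of_finrank_eq (by rw [hsum, hdim])
  -- u is central
  have hcent : ∀ x : H, u * x = x * u := by
    intro x
    have hx : x ∈ K ⊔ Kv := htop ▸ Submodule.mem_top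
    rw [Submodule.mem_sup] at hx
    obtain ⟨k, hk, z, hz, rfl⟩ := hx
    obtain ⟨k', hk', hkz⟩ := hz
    have hkz' : k' * v = z := hkz
    have h1 : u * k = k * u := line_comm hcenter hdim hK2 hK1 huK hk
    have h2 : u * k' = k' * u := line_comm hcenter hdim hK2 hK1 huK hk'
    rw [mul_add, add_mul, h1, ← hkz', ← mul_assoc, h2, mul_assoc, hcomm, ← mul_assoc]
  obtain ⟨a, ha⟩ := (hcenter u).1 hcent
  exact hu (ha ▸ algebraMap_mem_fone a)

/-- independence of y, y*w, y', y'*w when y' is not in the right coset y·K -/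
lemma indep4r (hcenter : CenterEqF F H) (hdim : Module.finrank F H = 4)
    {w : H} (hw : w ∉ Submodule.span F ({1} : Set H))
    {y y' : H} (hy : y ≠ 0)
    (hco : ∀ k ∈ Submodule.span F ({1, w} : Set H), y' ≠ y * k)
    {a b a' b' : F}
    (h : a • y + b • (y * w) + a' • y' + b' • (y' * w) = 0) :
    a = 0 ∧ b = 0 ∧ a' = 0 ∧ b' = 0 := by
  have hK2 : Module.finrank F (Submodule.span F ({1, w} : Set H)) = 2 :=
    finrank_span_one_pair hdim hw
  have hK1 : (1:H) ∈ Submodule.span F ({1, w} : Set H) := Submodule.subset_span (by simp)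
  have hk1m : (a • (1:H) + b • w) ∈ Submodule.span F ({1, w} : Set H) := by
    rw [mem_span_one]; exact ⟨a, b, rfl⟩
  have hk2m : (a' • (1:H) + b' • w) ∈ Submodule.span F ({1, w} : Set H) := by
    rw [mem_span_one]; exact ⟨a', b', rfl⟩
  have hexp : y * (a • (1:H) + b • w) + y' * (a' • (1:H) + b' • w) = 0 := by
    rw [mul_add, mul_add, mul_smul_comm, mul_smul_comm, mul_smul_comm, mul_smul_comm,
      mul_one, mul_one]
    linear_combination (norm := module) h
  have hk2z : a' • (1:H) + b' • w = 0 := by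
    by_contra hk2z
    apply hco (-((a • (1:H) + b • w) * (a' • (1:H) + b' • w)⁻¹)) _ _
    · exact Submodule.neg_mem _ (line_mul_mem hcenter hdim hK2 hK1 hk1m
        (line_inv_mem hcenter hdim hK2 hK1 hk2m hk2z))
    · have h1 : y' * (a' • (1:H) + b' • w) = -(y * (a • (1:H) + b • w)) := by
        linear_combination (norm := module) hexp
      have := congrArg (fun z => z * (a' • (1:H) + b' • w)⁻¹) h1
      simp only [mul_assoc, mul_inv_cancel₀ hk2z, mul_one, neg_mul] at this
      rw [this, mul_neg]
  obtain ⟨ha', hb'⟩ := pair_zero hw hk2z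
  have hk1z : a • (1:H) + b • w = 0 := by
    rw [hk2z, mul_zero, add_zero] at hexp
    rcases mul_eq_zero.1 hexp with h0 | h0
    · exact absurd h0 hy
    · exact h0
  obtain ⟨ha, hb⟩ := pair_zero hw hk1z
  exact ⟨ha, hb, ha', hb'⟩

/-- independence of y, w*y, y', w*y' when y' is not in the left coset K·y -/
lemma indep4l (hcenter : CenterEqF F H) (hdim : Module.finrank F H = 4)
    {w : H} (hw : w ∉ Submodule.span F ({1} : Set H))
    {y y' : H} (hy : y ≠ 0)
    (hco : ∀ k ∈ Submodule.span F ({1, w} : Set H), y' ≠ k * y)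
    {a b a' b' : F}
    (h : a • y + b • (w * y) + a' • y' + b' • (w * y') = 0) :
    a = 0 ∧ b = 0 ∧ a' = 0 ∧ b' = 0 := by
  have hK2 : Module.finrank F (Submodule.span F ({1, w} : Set H)) = 2 :=
    finrank_span_one_pair hdim hw
  have hK1 : (1:H) ∈ Submodule.span F ({1, w} : Set H) := Submodule.subset_span (by simp)
  have hk1m : (a • (1:H) + b • w) ∈ Submodule.span F ({1, w} : Set H) := by
    rw [mem_span_one]; exact ⟨a, b, rfl⟩
  have hk2m : (a' • (1:H) + b' • w) ∈ Submodule.span F ({1, w} : Set H) := by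
    rw [mem_span_one]; exact ⟨a', b', rfl⟩
  have hexp : (a • (1:H) + b • w) * y + (a' • (1:H) + b' • w) * y' = 0 := by
    rw [add_mul, add_mul, smul_mul_assoc, smul_mul_assoc, smul_mul_assoc, smul_mul_assoc,
      one_mul, one_mul]
    linear_combination (norm := module) h
  have hk2z : a' • (1:H) + b' • w = 0 := by
    by_contra hk2z
    apply hco (-((a' • (1:H) + b' • w)⁻¹ * (a • (1:H) + b • w))) _ _
    · exact Submodule.neg_mem _ (line_mul_mem hcenter hdim hK2 hK1
        (line_inv_mem hcenter hdim hK2 hK1 hk2m hk2z) hk1m)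
    · have h1 : (a' • (1:H) + b' • w) * y' = -((a • (1:H) + b • w) * y) := by
        linear_combination (norm := module) hexp
      have := congrArg (fun z => (a' • (1:H) + b' • w)⁻¹ * z) h1
      simp only [← mul_assoc, inv_mul_cancel₀ hk2z, one_mul, mul_neg] at this
      rw [this, neg_mul, mul_assoc]
  obtain ⟨ha', hb'⟩ := pair_zero hw hk2z
  have hk1z : a • (1:H) + b • w = 0 := by
    rw [hk2z, zero_mul, add_zero] at hexp
    rcases mul_eq_zero.1 hexp with h0 | h0
    · exact h0
    · exact absurd h0 hy
  obtain ⟨ha, hb⟩ := pair_zero hw hk1z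
  exact ⟨ha, hb, ha', hb'⟩

end CLP
namespace CLP
variable {F H : Type*} [Field F] [DivisionRing H] [Algebra F H]

/-- elements with the same irreducible quadratic are conjugate -/
lemma conj_elem (hcenter : CenterEqF F H) (hdim : Module.finrank F H = 4)
    {u v : H} (hu : u ∉ Submodule.span F ({1} : Set H)) {s t : F}
    (hqu : u * u = s • 1 + t • u) (hqv : v * v = s • 1 + t • v) :
    ∃ c : H, c ≠ 0 ∧ v * c = c * u := by
  have hvv : ∀ x : H, v * (v * x) = s • x + t • (v * x) := by
    intro x
    rw [← mul_assoc, hqv, add_mul, smul_mul_assoc, smul_mul_assoc, one_mul]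
  have huu : ∀ x : H, x * u * u = s • x + t • (x * u) := by
    intro x
    rw [mul_assoc, hqu, mul_add, mul_smul_comm, mul_smul_comm, mul_one]
  -- first dichotomy : T x = v*x - x*u
  by_cases hT : ∃ c : H, c ≠ 0 ∧ v * c - c * u = 0
  · obtain ⟨c, hc0, hc⟩ := hT
    exact ⟨c, hc0, by linear_combination (norm := noncomm_ring) hc⟩
  · push_neg at hT
    -- T is injective, and T ∘ S = 0, so S = 0 where S x = v*x + x*u - t•x
    have hTS : ∀ x : H, v * (v * x + x * u - t • x) - (v * x + x * u - t • x) * u = 0 := by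
      intro x
      have e1 : v * (v * x + x * u - t • x)
          = v * (v * x) + v * x * u - t • (v * x) := by
        rw [mul_sub, mul_add, mul_smul_comm, mul_assoc]
      have e2 : (v * x + x * u - t • x) * u
          = v * x * u + x * u * u - t • (x * u) := by
        rw [sub_mul, add_mul, smul_mul_assoc]
      rw [e1, e2, hvv, huu]
      module
    have hS : ∀ x : H, v * x + x * u - t • x = 0 := by
      intro x
      by_contra hx
      exact hT _ hx (hTS x)
    have hv1 := hS 1
    rw [mul_one, one_mul] at hv1
    -- v = t•1 - u
    have hveq : v = t • 1 - u := by linear_combination (norm := module) hv1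
    -- second dichotomy : S₀ x = u*x + x*u - t•x
    by_cases hS0 : ∃ c : H, c ≠ 0 ∧ u * c + c * u - t • c = 0
    · obtain ⟨c, hc0, hc⟩ := hS0
      refine ⟨c, hc0, ?_⟩
      rw [hveq]
      have : t • c = u * c + c * u := by linear_combination (norm := module) -hc
      rw [sub_mul, smul_mul_assoc, one_mul, this]
      module
    · push_neg at hS0
      exfalso
      have huu' : ∀ x : H, u * (u * x) = s • x + t • (u * x) := by
        intro x
        rw [← mul_assoc, hqu, add_mul, smul_mul_assoc, smul_mul_assoc, one_mul]
      have hST : ∀ x : H,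
          u * (u * x - x * u) + (u * x - x * u) * u - t • (u * x - x * u) = 0 := by
        intro x
        have e1 : u * (u * x - x * u) = u * (u * x) - u * x * u := by
          rw [mul_sub, mul_assoc]
        have e2 : (u * x - x * u) * u = u * x * u - x * u * u := by
          rw [sub_mul]
        rw [e1, e2, huu', huu]
        module
      have hT0 : ∀ x : H, u * x - x * u = 0 := by
        intro x
        by_contra hx
        exact hS0 _ hx (hST x)
      have hcent : ∀ x : H, u * x = x * u := by
        intro x
        have := hT0 x
        linear_combination (norm := noncomm_ring) this
      obtain ⟨a, ha⟩ := (hcenter u).1 hcent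
      exact hu (ha ▸ algebraMap_mem_fone a)

/-- normality contradiction : no line through 1 is invariant under all conjugations -/
lemma no_normal_line (hcenter : CenterEqF F H) (hdim : Module.finrank F H = 4)
    {K : Submodule F H} (hK2 : Module.finrank F K = 2) (hK1 : (1:H) ∈ K)
    (hnorm : ∀ g : H, g ≠ 0 → ∀ x ∈ K, ∃ y ∈ K, g * x = y * g) : False := by
  obtain ⟨u, huK, hu, hKs⟩ := exists_gen hdim hK2 hK1
  -- u is not central
  obtain ⟨x, hxu⟩ : ∃ x : H, u * x ≠ x * u := by
    by_contra hc
    push_neg at hc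
    obtain ⟨a, ha⟩ := (hcenter u).1 hc
    exact hu (ha ▸ algebraMap_mem_fone a)
  have hxK : x ∉ K := fun hxm => hxu (line_comm hcenter hdim hK2 hK1 huK hxm)
  have hx0 : x ≠ 0 := by rintro rfl; simp at hxu
  have hx1 : (1:H) + x ≠ 0 := by
    intro h
    apply hxu
    have : x = -1 := by linear_combination (norm := noncomm_ring) h
    rw [this]; noncomm_ring
  obtain ⟨k, hk, hkeq⟩ := hnorm x hx0 u huK
  obtain ⟨k', hk', hkeq'⟩ := hnorm (1 + x) hx1 u huK
  rw [hKs, mem_span_one] at hk hk'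
  obtain ⟨a, b, rfl⟩ := hk
  obtain ⟨c, d, rfl⟩ := hk'
  -- expand : c•1 + (d-1)•u + (c-a)•x + (d-b)•(u*x) = 0  ... careful with orientation
  -- hkeq : x * u = (a•1+b•u) * x ; hkeq' : (1+x)*u = (c•1+d•u)*(1+x)
  have hmain : (c • (1:H) + (d-1) • u) + ((c-a) • (1:H) + (d-b) • u) * x = 0 := by
    have h1 : x * u = a • x + b • (u * x) := by
      rw [hkeq, add_mul, smul_mul_assoc, smul_mul_assoc, one_mul]
    have h2 := hkeq'
    simp only [add_mul, mul_add, smul_mul_assoc, one_mul, mul_one] at h2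
    rw [add_mul, smul_mul_assoc, smul_mul_assoc, one_mul]
    linear_combination (norm := module) h1 - h2
  -- independence of 1, u, x, u*x (as k + k'·x with k,k' ∈ K)
  have hKmem1 : (c • (1:H) + (d-1) • u) ∈ K := by
    rw [hKs, mem_span_one]; exact ⟨c, d-1, rfl⟩
  have hKmem2 : ((c-a) • (1:H) + (d-b) • u) ∈ K := by
    rw [hKs, mem_span_one]; exact ⟨c-a, d-b, rfl⟩
  have hz2 : (c-a) • (1:H) + (d-b) • u = 0 := by
    by_contra hz
    apply hxK
    have h1 : ((c-a) • (1:H) + (d-b) • u) * x = -(c • (1:H) + (d-1) • u) := by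
      linear_combination (norm := module) hmain
    have h2 : x = ((c-a) • (1:H) + (d-b) • u)⁻¹ * (-(c • (1:H) + (d-1) • u)) := by
      rw [← h1, ← mul_assoc, inv_mul_cancel₀ hz, one_mul]
    rw [h2]
    exact line_mul_mem hcenter hdim hK2 hK1
      (line_inv_mem hcenter hdim hK2 hK1 hKmem2 hz)
      (Submodule.neg_mem _ hKmem1)
  have hz1 : c • (1:H) + (d-1) • u = 0 := by
    rw [hz2, zero_mul, add_zero] at hmain
    exact hmain
  have hgen : u ∉ Submodule.span F ({1} : Set H) := hu
  obtain ⟨hca, hdb⟩ := pair_zero hgen hz2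
  obtain ⟨hc0, hd1⟩ := pair_zero hgen hz1
  -- so a = 0, b = 1, giving x * u = u * x
  have ha0 : a = 0 := by rw [← sub_eq_zero.1 hca, hc0]
  have hb1 : b = 1 := by rw [← sub_eq_zero.1 hdb, sub_eq_zero.1 (by linear_combination hd1 : d - 1 = 0)]
  apply hxu
  rw [hkeq, ha0, hb1, zero_smul, one_smul, zero_add]

end CLP
namespace CLP
variable {F H : Type*} [Field F] [DivisionRing H] [Algebra F H]

lemma exists_not_mem_line (hdim : Module.finrank F H = 4) {K : Submodule F H}
    (hK2 : Module.finrank F K = 2) : ∃ z : H, z ∉ K := by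
  by_contra hc
  push_neg at hc
  have : K = ⊤ := Submodule.eq_top_iff'.2 hc
  rw [this, finrank_top, hdim] at hK2
  norm_num at hK2

lemma const_coeffs_right (hcenter : CenterEqF F H) (hdim : Module.finrank F H = 4)
    {w : H} (hw : w ∉ Submodule.span F ({1} : Set H))
    {S : H → H} (hadd : ∀ y z : H, S (y + z) = S y + S z)
    (hrep : ∀ y : H, ∃ c d : F, S y = c • y + d • (y * w)) :
    ∃ c d : F, ∀ y : H, S y = c • y + d • (y * w) := by
  have hK2 : Module.finrank F (Submodule.span F ({1, w} : Set H)) = 2 :=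
    finrank_span_one_pair hdim hw
  have hK1 : (1:H) ∈ Submodule.span F ({1, w} : Set H) := Submodule.subset_span (by simp)
  have key : ∀ (y y' : H) (cy dy cy' dy' : F), y ≠ 0 →
      (∀ k ∈ Submodule.span F ({1, w} : Set H), y' ≠ y * k) →
      S y = cy • y + dy • (y * w) → S y' = cy' • y' + dy' • (y' * w) →
      cy = cy' ∧ dy = dy' := by
    intro y y' cy dy cy' dy' hy hco hSy hSy'
    obtain ⟨e, f, hef⟩ := hrep (y + y')
    have hsum : S (y + y') = S y + S y' := hadd y y'
    rw [hef, hSy, hSy'] at hsum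
    have hzero : (cy - e) • y + (dy - f) • (y * w) + (cy' - e) • y' + (dy' - f) • (y' * w) = 0 := by
      have h2 : e • (y + y') + f • ((y + y') * w)
          = e • y + e • y' + (f • (y * w) + f • (y' * w)) := by
        rw [add_mul]; module
      rw [h2] at hsum
      linear_combination (norm := module) -hsum
    obtain ⟨h1, h2, h3, h4⟩ := indep4r hcenter hdim hw hy hco hzero
    exact ⟨by rw [← sub_eq_zero]; linear_combination h1 - h3,
           by rw [← sub_eq_zero]; linear_combination h2 - h4⟩
  obtain ⟨c, d, hc⟩ := hrep 1
  refine ⟨c, d, fun y => ?_⟩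
  rcases eq_or_ne y 0 with rfl | hy0
  · have h0 : S 0 = 0 := by
      have := hadd 0 0
      rw [add_zero] at this
      linear_combination (norm := module) -this
    rw [h0, zero_mul]; module
  obtain ⟨cy, dy, hcy⟩ := hrep y
  suffices h : cy = c ∧ dy = d by rw [hcy, h.1, h.2]
  by_cases hyK : y ∈ Submodule.span F ({1, w} : Set H)
  · obtain ⟨z, hz⟩ := exists_not_mem_line hdim hK2
    obtain ⟨cz, dz, hcz⟩ := hrep z
    have hz0 : z ≠ 0 := by rintro rfl; exact hz (Submodule.zero_mem _)
    have hcoz1 : ∀ k ∈ Submodule.span F ({1, w} : Set H), (1:H) ≠ z * k := by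
      intro k hk hk1
      apply hz
      have hkz : k ≠ 0 := by rintro rfl; rw [mul_zero] at hk1; exact one_ne_zero hk1
      rw [eq_inv_of_mul_eq_one_left hk1.symm]
      exact line_inv_mem hcenter hdim hK2 hK1 hk hkz
    have h1 : cz = c ∧ dz = d := key z 1 cz dz c d hz0 hcoz1 hcz hc
    have h2 : cy = cz ∧ dy = dz := by
      refine key y z cy dy cz dz hy0 ?_ hcy hcz
      intro k hk hk1
      exact hz (hk1 ▸ line_mul_mem hcenter hdim hK2 hK1 hyK hk)
    exact ⟨h2.1.trans h1.1, h2.2.trans h1.2⟩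
  · have := key 1 y c d cy dy one_ne_zero ?_ hc hcy
    · exact ⟨this.1.symm, this.2.symm⟩
    · intro k hk hk1
      exact hyK (by rw [hk1, one_mul]; exact hk)
end CLP
namespace CLP
variable {F H : Type*} [Field F] [DivisionRing H] [Algebra F H]

lemma const_coeffs_left (hcenter : CenterEqF F H) (hdim : Module.finrank F H = 4)
    {w : H} (hw : w ∉ Submodule.span F ({1} : Set H))
    {S : H → H} (hadd : ∀ y z : H, S (y + z) = S y + S z)
    (hrep : ∀ y : H, ∃ c d : F, S y = c • y + d • (w * y)) :
    ∃ c d : F, ∀ y : H, S y = c • y + d • (w * y) := by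
  have hK2 : Module.finrank F (Submodule.span F ({1, w} : Set H)) = 2 :=
    finrank_span_one_pair hdim hw
  have hK1 : (1:H) ∈ Submodule.span F ({1, w} : Set H) := Submodule.subset_span (by simp)
  have key : ∀ (y y' : H) (cy dy cy' dy' : F), y ≠ 0 →
      (∀ k ∈ Submodule.span F ({1, w} : Set H), y' ≠ k * y) →
      S y = cy • y + dy • (w * y) → S y' = cy' • y' + dy' • (w * y') →
      cy = cy' ∧ dy = dy' := by
    intro y y' cy dy cy' dy' hy hco hSy hSy'
    obtain ⟨e, f, hef⟩ := hrep (y + y')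
    have hsum : S (y + y') = S y + S y' := hadd y y'
    rw [hef, hSy, hSy'] at hsum
    have hzero : (cy - e) • y + (dy - f) • (w * y) + (cy' - e) • y' + (dy' - f) • (w * y') = 0 := by
      have h2 : e • (y + y') + f • (w * (y + y'))
          = e • y + e • y' + (f • (w * y) + f • (w * y')) := by
        rw [mul_add]; module
      rw [h2] at hsum
      linear_combination (norm := module) -hsum
    obtain ⟨h1, h2, h3, h4⟩ := indep4l hcenter hdim hw hy hco hzero
    exact ⟨by rw [← sub_eq_zero]; linear_combination h1 - h3,
           by rw [← sub_eq_zero]; linear_combination h2 - h4⟩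
  obtain ⟨c, d, hc⟩ := hrep 1
  refine ⟨c, d, fun y => ?_⟩
  rcases eq_or_ne y 0 with rfl | hy0
  · have h0 : S 0 = 0 := by
      have := hadd 0 0
      rw [add_zero] at this
      linear_combination (norm := module) -this
    rw [h0, mul_zero]; module
  obtain ⟨cy, dy, hcy⟩ := hrep y
  suffices h : cy = c ∧ dy = d by rw [hcy, h.1, h.2]
  by_cases hyK : y ∈ Submodule.span F ({1, w} : Set H)
  · obtain ⟨z, hz⟩ := exists_not_mem_line hdim hK2
    obtain ⟨cz, dz, hcz⟩ := hrep z
    have hz0 : z ≠ 0 := by rintro rfl; exact hz (Submodule.zero_mem _)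
    have hcoz1 : ∀ k ∈ Submodule.span F ({1, w} : Set H), (1:H) ≠ k * z := by
      intro k hk hk1
      apply hz
      have hkz : k ≠ 0 := by rintro rfl; rw [zero_mul] at hk1; exact one_ne_zero hk1
      rw [eq_inv_of_mul_eq_one_right hk1.symm]
      exact line_inv_mem hcenter hdim hK2 hK1 hk hkz
    have h1 : cz = c ∧ dz = d := key z 1 cz dz c d hz0 hcoz1 hcz hc
    have h2 : cy = cz ∧ dy = dz := by
      refine key y z cy dy cz dz hy0 ?_ hcy hcz
      intro k hk hk1
      exact hz (hk1 ▸ line_mul_mem hcenter hdim hK2 hK1 hk hyK)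
    exact ⟨h2.1.trans h1.1, h2.2.trans h1.2⟩
  · have := key 1 y c d cy dy one_ne_zero ?_ hc hcy
    · exact ⟨this.1.symm, this.2.symm⟩
    · intro k hk hk1
      exact hyK (by rw [hk1, mul_one]; exact hk)
end CLP
namespace CLP
variable {F H : Type*} [Field F] [DivisionRing H] [Algebra F H]

/-- image algebra helpers -/
lemma image_left_left (a b : H) (s : Set H) :
    (fun m => a * m) '' ((fun m => b * m) '' s) = (fun m => (a * b) * m) '' s := by
  rw [Set.image_image]
  simp only [mul_assoc]

lemma image_right_right (a b : H) (s : Set H) :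
    (fun m => m * a) '' ((fun m => m * b) '' s) = (fun m => m * (b * a)) '' s := by
  rw [Set.image_image]
  simp only [mul_assoc]

lemma image_right_left (a b : H) (s : Set H) :
    (fun m => m * a) '' ((fun m => b * m) '' s) = (fun m => b * m) '' ((fun m => m * a) '' s) := by
  rw [Set.image_image, Set.image_image]
  simp only [mul_assoc]

lemma image_one_left (s : Set H) : (fun m => (1:H) * m) '' s = s := by
  have : (fun m : H => (1:H) * m) = id := funext fun m => one_mul m
  rw [this, Set.image_id]

lemma image_one_right (s : Set H) : (fun m => m * (1:H)) '' s = s := by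
  have : (fun m : H => m * (1:H)) = id := funext fun m => mul_one m
  rw [this, Set.image_id]

/-- left/right multiplication as linear equivalences -/
noncomputable def lmulE (c : H) (hc : c ≠ 0) : H ≃ₗ[F] H :=
  LinearEquiv.ofBijective (LinearMap.mulLeft F c)
    ⟨fun a b hab => mul_left_cancel₀ hc hab,
     fun y => ⟨c⁻¹ * y, by simp [LinearMap.mulLeft_apply, ← mul_assoc, mul_inv_cancel₀ hc]⟩⟩

noncomputable def rmulE (c : H) (hc : c ≠ 0) : H ≃ₗ[F] H :=
  LinearEquiv.ofBijective (LinearMap.mulRight F c)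
    ⟨fun a b hab => mul_right_cancel₀ hc hab,
     fun y => ⟨y * c⁻¹, by simp [LinearMap.mulRight_apply, mul_assoc, inv_mul_cancel₀ hc]⟩⟩

lemma lmulE_apply (c : H) (hc : c ≠ 0) (x : H) : lmulE (F := F) c hc x = c * x := rfl
lemma rmulE_apply (c : H) (hc : c ≠ 0) (x : H) : rmulE (F := F) c hc x = x * c := rfl

/-- image of a line under a linear equivalence -/
noncomputable def mapLine (e : H ≃ₗ[F] H) (L : Line F H) : Line F H :=
  ⟨Submodule.map (e : H →ₗ[F] H) L.1, by rw [LinearEquiv.finrank_map_eq e L.1]; exact L.2⟩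

lemma mapLine_coe (e : H ≃ₗ[F] H) (L : Line F H) :
    ((mapLine e L).1 : Set H) = ⇑e '' (L.1 : Set H) := by
  simp [mapLine, Submodule.map_coe]

lemma lmulLine_coe (c : H) (hc : c ≠ 0) (L : Line F H) :
    ((mapLine (lmulE (F := F) c hc) L).1 : Set H) = (fun m => c * m) '' (L.1 : Set H) := by
  rw [mapLine_coe]; rfl

lemma rmulLine_coe (c : H) (hc : c ≠ 0) (L : Line F H) :
    ((mapLine (rmulE (F := F) c hc) L).1 : Set H) = (fun m => m * c) '' (L.1 : Set H) := by
  rw [mapLine_coe]; rfl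

lemma line_ext {M N : Line F H} (h : (M.1 : Set H) = (N.1 : Set H)) : M = N :=
  Subtype.ext (SetLike.coe_injective h)

lemma line_exists_ne_zero (M : Line F H) : ∃ m : H, m ∈ M.1 ∧ m ≠ 0 := by
  by_contra hc
  push_neg at hc
  have : M.1 = ⊥ := by
    rw [Submodule.eq_bot_iff]
    exact fun x hx => hc x hx
  have h2 := M.2
  rw [this, finrank_bot] at h2
  norm_num at h2

/-- LeftPar / RightPar are equivalences -/
lemma leftPar_refl (M : Submodule F H) : LeftPar F H M M :=
  ⟨1, one_ne_zero, (image_one_left _).symm⟩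

lemma leftPar_symm {M N : Submodule F H} (h : LeftPar F H M N) : LeftPar F H N M := by
  obtain ⟨g, hg, hgs⟩ := h
  exact ⟨g⁻¹, inv_ne_zero hg, by
    rw [hgs, image_left_left, inv_mul_cancel₀ hg, image_one_left]⟩

lemma leftPar_trans {M N P : Submodule F H} (h1 : LeftPar F H M N) (h2 : LeftPar F H N P) :
    LeftPar F H M P := by
  obtain ⟨g, hg, hgs⟩ := h1
  obtain ⟨g', hg', hgs'⟩ := h2
  exact ⟨g' * g, mul_ne_zero hg' hg, by rw [hgs', hgs, image_left_left]⟩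

lemma rightPar_refl (M : Submodule F H) : RightPar F H M M :=
  ⟨1, one_ne_zero, (image_one_right _).symm⟩

lemma rightPar_symm {M N : Submodule F H} (h : RightPar F H M N) : RightPar F H N M := by
  obtain ⟨g, hg, hgs⟩ := h
  exact ⟨g⁻¹, inv_ne_zero hg, by
    rw [hgs, image_right_right, mul_inv_cancel₀ hg, image_one_right]⟩

lemma rightPar_trans {M N P : Submodule F H} (h1 : RightPar F H M N) (h2 : RightPar F H N P) :
    RightPar F H M P := by
  obtain ⟨g, hg, hgs⟩ := h1
  obtain ⟨g', hg', hgs'⟩ := h2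
  exact ⟨g * g', mul_ne_zero hg hg', by rw [hgs', hgs, image_right_right]⟩

lemma leftClass_eq {M K : Line F H} (h : LeftPar F H M.1 K.1) :
    leftClass F H M = leftClass F H K := by
  ext N
  exact ⟨fun hN => leftPar_trans hN h, fun hN => leftPar_trans hN (leftPar_symm h)⟩

lemma rightClass_eq {M K : Line F H} (h : RightPar F H M.1 K.1) :
    rightClass F H M = rightClass F H K := by
  ext N
  exact ⟨fun hN => rightPar_trans hN h, fun hN => rightPar_trans hN (rightPar_symm h)⟩

lemma parClass_eq {par : Line F H → Line F H → Prop} (hE : Equivalence par)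
    {M K : Line F H} (h : par M K) : parClass F H par M = parClass F H par K := by
  ext N
  exact ⟨fun hN => hE.trans hN h, fun hN => hE.trans hN (hE.symm h)⟩

/-- a line left-parallel to a field line K, through a given point x, equals x·K -/
lemma left_coset_through (hcenter : CenterEqF F H) (hdim : Module.finrank F H = 4)
    {K P : Line F H} (hK1 : (1:H) ∈ K.1) (h : LeftPar F H P.1 K.1)
    {x : H} (hx : x ∈ P.1) (hx0 : x ≠ 0) :
    (P.1 : Set H) = (fun m => x * m) '' (K.1 : Set H) := by
  obtain ⟨g, hg, hgs⟩ := h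
  have hP : (P.1 : Set H) = (fun m => g⁻¹ * m) '' (K.1 : Set H) := by
    rw [hgs, image_left_left, inv_mul_cancel₀ hg, image_one_left]
  obtain ⟨k, hk, hkx⟩ : ∃ k ∈ (K.1 : Set H), g⁻¹ * k = x := by
    have hx' : x ∈ (P.1 : Set H) := hx
    rw [hP] at hx'; exact hx'
  have hk0 : k ≠ 0 := by rintro rfl; rw [mul_zero] at hkx; exact hx0 hkx.symm
  have hginv : g⁻¹ = x * k⁻¹ := by rw [← hkx, mul_assoc, mul_inv_cancel₀ hk0, mul_one]
  rw [hP, hginv, ← image_left_left x k⁻¹,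
    line_smul_set hcenter hdim K.2 hK1 (line_inv_mem hcenter hdim K.2 hK1 hk hk0)
      (inv_ne_zero hk0)]

lemma right_coset_through (hcenter : CenterEqF F H) (hdim : Module.finrank F H = 4)
    {K P : Line F H} (hK1 : (1:H) ∈ K.1) (h : RightPar F H P.1 K.1)
    {x : H} (hx : x ∈ P.1) (hx0 : x ≠ 0) :
    (P.1 : Set H) = (fun m => m * x) '' (K.1 : Set H) := by
  obtain ⟨g, hg, hgs⟩ := h
  have hP : (P.1 : Set H) = (fun m => m * g⁻¹) '' (K.1 : Set H) := by
    rw [hgs, image_right_right, mul_inv_cancel₀ hg, image_one_right]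
  obtain ⟨k, hk, hkx⟩ : ∃ k ∈ (K.1 : Set H), k * g⁻¹ = x := by
    have hx' : x ∈ (P.1 : Set H) := hx
    rw [hP] at hx'; exact hx'
  have hk0 : k ≠ 0 := by rintro rfl; rw [zero_mul] at hkx; exact hx0 hkx.symm
  have hginv : g⁻¹ = k⁻¹ * x := by rw [← hkx, ← mul_assoc, inv_mul_cancel₀ hk0, one_mul]
  rw [hP, hginv, ← image_right_right x k⁻¹,
    line_set_smul hcenter hdim K.2 hK1 (line_inv_mem hcenter hdim K.2 hK1 hk hk0)
      (inv_ne_zero hk0)]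

/-- two field lines that are left (or right) parallel coincide -/
lemma leftPar_through_one (hcenter : CenterEqF F H) (hdim : Module.finrank F H = 4)
    {K K' : Line F H} (hK1 : (1:H) ∈ K.1) (hK1' : (1:H) ∈ K'.1)
    (h : LeftPar F H K'.1 K.1) : K' = K := by
  apply line_ext
  rw [left_coset_through hcenter hdim hK1 h hK1' one_ne_zero, image_one_left]

lemma rightPar_through_one (hcenter : CenterEqF F H) (hdim : Module.finrank F H = 4)
    {K K' : Line F H} (hK1 : (1:H) ∈ K.1) (hK1' : (1:H) ∈ K'.1)
    (h : RightPar F H K'.1 K.1) : K' = K := by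
  apply line_ext
  rw [right_coset_through hcenter hdim hK1 h hK1' one_ne_zero, image_one_right]

/-- no field line has equal left and right classes -/
lemma notboth (hcenter : CenterEqF F H) (hdim : Module.finrank F H = 4)
    {K K' : Line F H} (hK1 : (1:H) ∈ K.1) (hK1' : (1:H) ∈ K'.1) :
    leftClass F H K ≠ rightClass F H K' := by
  intro heq
  have hKK' : K = K' := by
    have hmem : K ∈ leftClass F H K := leftPar_refl K.1
    rw [heq] at hmem
    exact rightPar_through_one hcenter hdim hK1' hK1 hmem
  subst hKK'
  apply no_normal_line hcenter hdim K.2 hK1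
  intro g hg x hx
  -- the line g·K is in the left class, hence in the right class of K
  have hmem : mapLine (lmulE (F := F) g hg) K ∈ leftClass F H K := by
    refine ⟨g⁻¹, inv_ne_zero hg, ?_⟩
    rw [lmulLine_coe, image_left_left, inv_mul_cancel₀ hg, image_one_left]
  rw [heq] at hmem
  obtain ⟨h, hh, hhs⟩ := hmem
  rw [lmulLine_coe] at hhs
  -- K = (g·K)·h , and 1 ∈ K gives h = (g k₀)⁻¹
  have h1K : (1:H) ∈ (fun m => m * h) '' ((fun m => g * m) '' (K.1 : Set H)) := by
    rw [← hhs]; exact hK1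
  obtain ⟨_, ⟨k₀, hk₀, rfl⟩, h1⟩ := h1K
  change g * k₀ * h = 1 at h1
  have hgk₀ : g * k₀ ≠ 0 := by
    intro hz; rw [hz, zero_mul] at h1; exact one_ne_zero h1.symm
  have hk₀0 : k₀ ≠ 0 := fun hz => hgk₀ (by rw [hz, mul_zero])
  have hh' : h = k₀⁻¹ * g⁻¹ := by
    rw [eq_inv_of_mul_eq_one_right h1, mul_inv_rev]
  -- now g * (x * k₀) * h = g * x * g⁻¹ ∈ K
  have hxk₀ : x * k₀ ∈ K.1 := line_mul_mem hcenter hdim K.2 hK1 hx hk₀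
  have hmem2 : g * (x * k₀) * h ∈ (K.1 : Set H) := by
    rw [hhs]
    exact ⟨g * (x * k₀), ⟨x * k₀, hxk₀, rfl⟩, rfl⟩
  have heq2 : g * (x * k₀) * h = g * x * g⁻¹ := by
    rw [hh']
    rw [show g * (x * k₀) * (k₀⁻¹ * g⁻¹) = g * x * (k₀ * k₀⁻¹) * g⁻¹ by noncomm_ring,
      mul_inv_cancel₀ hk₀0, mul_one]
  rw [heq2] at hmem2
  exact ⟨g * x * g⁻¹, hmem2, by
    rw [mul_assoc, inv_mul_cancel₀ hg, mul_one]⟩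

end CLP
namespace CLP
variable {F H : Type*} [Field F] [DivisionRing H] [Algebra F H]

noncomputable def conjLine (c : H) (hc : c ≠ 0) (K : Line F H) : Line F H :=
  mapLine (rmulE c⁻¹ (inv_ne_zero hc)) (mapLine (lmulE c hc) K)

lemma conjLine_coe (c : H) (hc : c ≠ 0) (K : Line F H) :
    ((conjLine c hc K).1 : Set H)
      = (fun m => m * c⁻¹) '' ((fun m => c * m) '' (K.1 : Set H)) := by
  rw [conjLine, rmulLine_coe, lmulLine_coe]

lemma conjLine_one_mem {c : H} (hc : c ≠ 0) {K : Line F H} (hK1 : (1:H) ∈ K.1) :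
    (1:H) ∈ (conjLine c hc K).1 := by
  have : (1:H) ∈ ((conjLine c hc K).1 : Set H) := by
    rw [conjLine_coe]
    exact ⟨c, ⟨1, hK1, mul_one c⟩, by show c * c⁻¹ = 1; rw [mul_inv_cancel₀ hc]⟩
  exact this

lemma conjLine_conjLine {c : H} (hc : c ≠ 0) (K : Line F H) :
    conjLine c⁻¹ (inv_ne_zero hc) (conjLine c hc K) = K := by
  apply line_ext
  rw [conjLine_coe, conjLine_coe, inv_inv]
  rw [Set.image_image, Set.image_image, Set.image_image]
  have hfun : ∀ m : H, c⁻¹ * (c * m * c⁻¹) * c = m := by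
    intro m
    rw [show c⁻¹ * (c * m * c⁻¹) * c = (c⁻¹ * c) * m * (c⁻¹ * c) by noncomm_ring,
      inv_mul_cancel₀ hc, one_mul, mul_one]
  calc (fun m => c⁻¹ * (c * m * c⁻¹) * c) '' (K.1 : Set H)
      = id '' (K.1 : Set H) := by
        apply congrArg (fun f => f '' (K.1 : Set H))
        funext m
        exact hfun m
    _ = (K.1 : Set H) := Set.image_id _

section PAR
variable {par : Line F H → Line F H → Prop}

/-- class-type transport along left parallels -/
lemma parClass_left_transport (hE : Equivalence par) {M K : Line F H}
    (hM : parClass F H par M = leftClass F H M) (hMK : LeftPar F H M.1 K.1) :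
    parClass F H par K = leftClass F H K := by
  have hpKM : par K M := by
    have : K ∈ parClass F H par M := by
      rw [hM]; exact leftPar_symm hMK
    exact this
  calc parClass F H par K = parClass F H par M := parClass_eq hE hpKM
    _ = leftClass F H M := hM
    _ = leftClass F H K := leftClass_eq hMK

lemma parClass_right_transport (hE : Equivalence par) {M K : Line F H}
    (hM : parClass F H par M = rightClass F H M) (hMK : RightPar F H M.1 K.1) :
    parClass F H par K = rightClass F H K := by
  have hpKM : par K M := by
    have : K ∈ parClass F H par M := by
      rw [hM]; exact rightPar_symm hMK
    exact this
  calc parClass F H par K = parClass F H par M := parClass_eq hE hpKM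
    _ = rightClass F H M := hM
    _ = rightClass F H K := rightClass_eq hMK

/-- conjugation invariance of the set ℱ -/
lemma inF_conj (hcenter : CenterEqF F H) (hdim : Module.finrank F H = 4)
    (hE : Equivalence par)
    (hdich : ∀ M : Line F H,
      parClass F H par M = leftClass F H M ∨ parClass F H par M = rightClass F H M)
    {K : Line F H} (hK1 : (1:H) ∈ K.1) {c : H} (hc : c ≠ 0)
    (hK : parClass F H par K = leftClass F H K) :
    parClass F H par (conjLine c hc K) = leftClass F H (conjLine c hc K) := by
  have hK1' : (1:H) ∈ (conjLine c hc K).1 := conjLine_one_mem hc hK1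
  rcases hdich (conjLine c hc K) with hL | hR
  · exact hL
  · exfalso
    have hML : LeftPar F H (mapLine (lmulE (F := F) c hc) K).1 K.1 :=
      ⟨c⁻¹, inv_ne_zero hc, by
        rw [lmulLine_coe, image_left_left, inv_mul_cancel₀ hc, image_one_left]⟩
    have hMR : RightPar F H (mapLine (lmulE (F := F) c hc) K).1 (conjLine c hc K).1 :=
      ⟨c⁻¹, inv_ne_zero hc, by rw [conjLine_coe, lmulLine_coe]⟩
    have hpMK : par (mapLine (lmulE (F := F) c hc) K) K := by
      have : (mapLine (lmulE (F := F) c hc) K) ∈ parClass F H par K := by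
        rw [hK]; exact hML
      exact this
    have hpMK' : par (mapLine (lmulE (F := F) c hc) K) (conjLine c hc K) := by
      have : (mapLine (lmulE (F := F) c hc) K) ∈ parClass F H par (conjLine c hc K) := by
        rw [hR]; exact hMR
      exact this
    have hpKK' : par K (conjLine c hc K) := hE.trans (hE.symm hpMK) hpMK'
    have hmem : K ∈ rightClass F H (conjLine c hc K) := by
      rw [← hR]; exact hpKK'
    have hKeq : K = conjLine c hc K := rightPar_through_one hcenter hdim hK1' hK1 hmem
    rw [← hKeq] at hR
    exact notboth hcenter hdim hK1 hK1 (hK.symm.trans hR)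

lemma inF_conj_iff (hcenter : CenterEqF F H) (hdim : Module.finrank F H = 4)
    (hE : Equivalence par)
    (hdich : ∀ M : Line F H,
      parClass F H par M = leftClass F H M ∨ parClass F H par M = rightClass F H M)
    {K : Line F H} (hK1 : (1:H) ∈ K.1) {c : H} (hc : c ≠ 0) :
    (parClass F H par K = leftClass F H K)
      ↔ (parClass F H par (conjLine c hc K) = leftClass F H (conjLine c hc K)) := by
  constructor
  · exact inF_conj hcenter hdim hE hdich hK1 hc
  · intro h
    have := inF_conj hcenter hdim hE hdich (conjLine_one_mem hc hK1) (inv_ne_zero hc) h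
    rwa [conjLine_conjLine] at this

/-- left translations preserve any Clifford-like parallelism -/
lemma lmul_preserves (hcenter : CenterEqF F H) (hdim : Module.finrank F H = 4)
    (hE : Equivalence par)
    (hdich : ∀ M : Line F H,
      parClass F H par M = leftClass F H M ∨ parClass F H par M = rightClass F H M)
    {c : H} (hc : c ≠ 0) {M N : Line F H} (h : par M N) :
    par (mapLine (lmulE (F := F) c hc) M) (mapLine (lmulE (F := F) c hc) N) := by
  obtain ⟨m₀, hm₀M, hm₀⟩ := line_exists_ne_zero M
  rcases hdich M with hM | hM
  · -- left class case
    have hMK : LeftPar F H M.1 (mapLine (lmulE (F := F) m₀⁻¹ (inv_ne_zero hm₀)) M).1 :=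
      ⟨m₀⁻¹, inv_ne_zero hm₀, by rw [lmulLine_coe]⟩
    have hK1 : (1:H) ∈ (mapLine (lmulE (F := F) m₀⁻¹ (inv_ne_zero hm₀)) M).1 := by
      have : (1:H) ∈ ((mapLine (lmulE (F := F) m₀⁻¹ (inv_ne_zero hm₀)) M).1 : Set H) := by
        rw [lmulLine_coe]
        exact ⟨m₀, hm₀M, inv_mul_cancel₀ hm₀⟩
      exact this
    have hKF : parClass F H par (mapLine (lmulE (F := F) m₀⁻¹ (inv_ne_zero hm₀)) M)
        = leftClass F H (mapLine (lmulE (F := F) m₀⁻¹ (inv_ne_zero hm₀)) M) :=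
      parClass_left_transport hE hM hMK
    -- c·M and c·N are in the left class of K
    have hcM : LeftPar F H (mapLine (lmulE (F := F) c hc) M).1
        (mapLine (lmulE (F := F) m₀⁻¹ (inv_ne_zero hm₀)) M).1 := by
      refine ⟨m₀⁻¹ * c⁻¹, mul_ne_zero (inv_ne_zero hm₀) (inv_ne_zero hc), ?_⟩
      rw [lmulLine_coe, lmulLine_coe, image_left_left]
      congr 2
      rw [mul_assoc, inv_mul_cancel₀ hc, mul_one]
    have hcN : LeftPar F H (mapLine (lmulE (F := F) c hc) N).1
        (mapLine (lmulE (F := F) m₀⁻¹ (inv_ne_zero hm₀)) M).1 := by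
      have hNM : LeftPar F H N.1 M.1 := by
        have : N ∈ parClass F H par M := hE.symm h
        rw [hM] at this
        exact this
      obtain ⟨g, hg, hgs⟩ := leftPar_trans hNM hMK
      refine ⟨g * c⁻¹, mul_ne_zero hg (inv_ne_zero hc), ?_⟩
      rw [hgs, lmulLine_coe, image_left_left]
      simp only [mul_assoc, inv_mul_cancel_left₀ hc]
    have hp1 : par (mapLine (lmulE (F := F) c hc) M)
        (mapLine (lmulE (F := F) m₀⁻¹ (inv_ne_zero hm₀)) M) := by
      have : (mapLine (lmulE (F := F) c hc) M)
          ∈ parClass F H par (mapLine (lmulE (F := F) m₀⁻¹ (inv_ne_zero hm₀)) M) := by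
        rw [hKF]; exact hcM
      exact this
    have hp2 : par (mapLine (lmulE (F := F) c hc) N)
        (mapLine (lmulE (F := F) m₀⁻¹ (inv_ne_zero hm₀)) M) := by
      have : (mapLine (lmulE (F := F) c hc) N)
          ∈ parClass F H par (mapLine (lmulE (F := F) m₀⁻¹ (inv_ne_zero hm₀)) M) := by
        rw [hKF]; exact hcN
      exact this
    exact hE.trans hp1 (hE.symm hp2)
  · -- right class case
    have hMK : RightPar F H M.1 (mapLine (rmulE (F := F) m₀⁻¹ (inv_ne_zero hm₀)) M).1 :=
      ⟨m₀⁻¹, inv_ne_zero hm₀, by rw [rmulLine_coe]⟩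
    have hK1 : (1:H) ∈ (mapLine (rmulE (F := F) m₀⁻¹ (inv_ne_zero hm₀)) M).1 := by
      have : (1:H) ∈ ((mapLine (rmulE (F := F) m₀⁻¹ (inv_ne_zero hm₀)) M).1 : Set H) := by
        rw [rmulLine_coe]
        exact ⟨m₀, hm₀M, mul_inv_cancel₀ hm₀⟩
      exact this
    have hKF : parClass F H par (mapLine (rmulE (F := F) m₀⁻¹ (inv_ne_zero hm₀)) M)
        = rightClass F H (mapLine (rmulE (F := F) m₀⁻¹ (inv_ne_zero hm₀)) M) :=
      parClass_right_transport hE hM hMK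
    -- the conjugated field line
    have hKF' : parClass F H par
          (conjLine c hc (mapLine (rmulE (F := F) m₀⁻¹ (inv_ne_zero hm₀)) M))
        = rightClass F H
          (conjLine c hc (mapLine (rmulE (F := F) m₀⁻¹ (inv_ne_zero hm₀)) M)) := by
      rcases hdich (conjLine c hc (mapLine (rmulE (F := F) m₀⁻¹ (inv_ne_zero hm₀)) M)) with hL | hR
      · exfalso
        have := (inF_conj_iff hcenter hdim hE hdich hK1 hc).2 hL
        exact notboth hcenter hdim hK1 hK1 (this.symm.trans hKF)
      · exact hR
    have hK1' : (1:H) ∈ (conjLine c hc (mapLine (rmulE (F := F) m₀⁻¹ (inv_ne_zero hm₀)) M)).1 :=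
      conjLine_one_mem hc hK1
    have hcM : RightPar F H (mapLine (lmulE (F := F) c hc) M).1
        (conjLine c hc (mapLine (rmulE (F := F) m₀⁻¹ (inv_ne_zero hm₀)) M)).1 := by
      refine ⟨m₀⁻¹ * c⁻¹, mul_ne_zero (inv_ne_zero hm₀) (inv_ne_zero hc), ?_⟩
      rw [conjLine_coe, rmulLine_coe, lmulLine_coe]
      rw [Set.image_image, Set.image_image, Set.image_image]
      simp only [mul_assoc]
    have hcN : RightPar F H (mapLine (lmulE (F := F) c hc) N).1
        (conjLine c hc (mapLine (rmulE (F := F) m₀⁻¹ (inv_ne_zero hm₀)) M)).1 := by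
      have hNM : RightPar F H N.1 M.1 := by
        have : N ∈ parClass F H par M := hE.symm h
        rw [hM] at this
        exact this
      obtain ⟨g, hg, hgs⟩ := rightPar_trans hNM hMK
      refine ⟨g * c⁻¹, mul_ne_zero hg (inv_ne_zero hc), ?_⟩
      rw [conjLine_coe, hgs, lmulLine_coe]
      rw [Set.image_image, Set.image_image, Set.image_image]
      simp only [mul_assoc]
    have hp1 : par (mapLine (lmulE (F := F) c hc) M)
        (conjLine c hc (mapLine (rmulE (F := F) m₀⁻¹ (inv_ne_zero hm₀)) M)) := by
      have : (mapLine (lmulE (F := F) c hc) M)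
          ∈ parClass F H par (conjLine c hc (mapLine (rmulE (F := F) m₀⁻¹ (inv_ne_zero hm₀)) M)) := by
        rw [hKF']; exact hcM
      exact this
    have hp2 : par (mapLine (lmulE (F := F) c hc) N)
        (conjLine c hc (mapLine (rmulE (F := F) m₀⁻¹ (inv_ne_zero hm₀)) M)) := by
      have : (mapLine (lmulE (F := F) c hc) N)
          ∈ parClass F H par (conjLine c hc (mapLine (rmulE (F := F) m₀⁻¹ (inv_ne_zero hm₀)) M)) := by
        rw [hKF']; exact hcN
      exact this
    exact hE.trans hp1 (hE.symm hp2)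

end PAR
end CLP
namespace CLP
variable {F H : Type*} [Field F] [DivisionRing H] [Algebra F H]

lemma gamma_one_mem (γ : H ≃ₗ[F] H) (hγ1 : γ 1 = 1) {K : Line F H} (hK1 : (1:H) ∈ K.1) :
    (1:H) ∈ (mapLine γ K).1 := by
  have : (1:H) ∈ ((mapLine γ K).1 : Set H) := by
    rw [mapLine_coe]
    exact ⟨1, hK1, hγ1⟩
  exact this

lemma gamma_smul_one (γ : H ≃ₗ[F] H) (hγ1 : γ 1 = 1) (a : F) : γ (a • (1:H)) = a • 1 := by
  rw [map_smul, hγ1]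

lemma gamma_not_fone (γ : H ≃ₗ[F] H) (hγ1 : γ 1 = 1) {u : H}
    (hu : u ∉ Submodule.span F ({1} : Set H)) : γ u ∉ Submodule.span F ({1} : Set H) := by
  intro hmem
  rw [mem_fone] at hmem
  obtain ⟨a, ha⟩ := hmem
  apply hu
  rw [mem_fone]
  refine ⟨a, ?_⟩
  have : γ u = γ (a • 1) := by rw [gamma_smul_one γ hγ1, ha]
  exact γ.injective this

lemma gamma_ne_zero (γ : H ≃ₗ[F] H) {x : H} (hx : x ≠ 0) : γ x ≠ 0 := by
  intro h
  exact hx (by simpa using γ.injective (h.trans (map_zero γ).symm))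

lemma gamma_span_pair (γ : H ≃ₗ[F] H) (hγ1 : γ 1 = 1) (u : H) :
    Submodule.map (γ : H →ₗ[F] H) (Submodule.span F ({1, u} : Set H))
      = Submodule.span F ({1, γ u} : Set H) := by
  rw [Submodule.map_span]
  congr 1
  rw [Set.image_insert_eq, Set.image_singleton]
  simp only [LinearEquiv.coe_coe, hγ1]

/-- the image of a field line under γ (linear, fixing 1) equals a conjugate line,
where c conjugates u to γ u -/
lemma gamma_line_eq_conj (hcenter : CenterEqF F H) (hdim : Module.finrank F H = 4)
    (γ : H ≃ₗ[F] H) (hγ1 : γ 1 = 1) {u : H} (hu : u ∉ Submodule.span F ({1} : Set H))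
    {c : H} (hc : c ≠ 0) (hconj : γ u * c = c * u)
    {K : Line F H} (hKs : K.1 = Submodule.span F ({1, u} : Set H)) :
    mapLine γ K = conjLine c hc K := by
  apply line_ext
  rw [mapLine_coe, conjLine_coe, Set.image_image]
  apply Set.image_congr
  intro k hk
  have hk' : k ∈ Submodule.span F ({1, u} : Set H) := by rw [← hKs]; exact hk
  rw [mem_span_one] at hk'
  obtain ⟨a, b, rfl⟩ := hk'
  have hcu : c * u * c⁻¹ = γ u := by
    rw [← hconj, mul_assoc, mul_inv_cancel₀ hc, mul_one]
  show γ (a • 1 + b • u) = c * (a • 1 + b • u) * c⁻¹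
  rw [map_add, map_smul, map_smul, hγ1]
  rw [mul_add, add_mul, mul_smul_comm, mul_smul_comm, smul_mul_assoc, smul_mul_assoc,
    mul_one, mul_inv_cancel₀ hc, hcu]

/-- conjugating element for the γ-image of a field line -/
lemma gamma_conj_elem (hcenter : CenterEqF F H) (hdim : Module.finrank F H = 4)
    (γ : H ≃ₗ[F] H) (hγ1 : γ 1 = 1) {u : H} (hu : u ∉ Submodule.span F ({1} : Set H))
    (hsq : γ (u * u) = γ u * γ u) :
    ∃ c : H, c ≠ 0 ∧ γ u * c = c * u := by
  have hq : u * u ∈ Submodule.span F ({1, u} : Set H) := sq_mem_span hcenter hdim hu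
  rw [mem_span_one] at hq
  obtain ⟨s, t, hst⟩ := hq
  have hq' : γ u * γ u = s • 1 + t • γ u := by
    rw [← hsq, hst, map_add, map_smul, map_smul, hγ1]
  obtain ⟨c, hc, hconj⟩ := conj_elem hcenter hdim hu hst hq'
  exact ⟨c, hc, hconj⟩

lemma gamma_image_left {γ : H ≃ₗ[F] H} (hmul : ∀ x y : H, γ (x * y) = γ x * γ y)
    (x : H) (s : Set H) :
    ⇑γ '' ((fun m => x * m) '' s) = (fun m => γ x * m) '' (⇑γ '' s) := by
  rw [Set.image_image, Set.image_image]
  apply Set.image_congr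
  intro m _
  exact hmul x m

lemma gamma_image_right {γ : H ≃ₗ[F] H} (hmul : ∀ x y : H, γ (x * y) = γ x * γ y)
    (x : H) (s : Set H) :
    ⇑γ '' ((fun m => m * x) '' s) = (fun m => m * γ x) '' (⇑γ '' s) := by
  rw [Set.image_image, Set.image_image]
  apply Set.image_congr
  intro m _
  exact hmul m x

lemma gamma_mul_one (γ : H ≃ₗ[F] H) (hmul : ∀ x y : H, γ (x * y) = γ x * γ y) : γ 1 = 1 := by
  have h := hmul 1 1
  rw [one_mul] at h
  have : γ 1 * 1 = γ 1 * γ 1 := by rw [mul_one]; exact h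
  have h10 : γ (1:H) ≠ 0 := gamma_ne_zero γ one_ne_zero
  exact (mul_left_cancel₀ h10 this).symm

/-- Master Lemma 2 : a multiplicative linear bijection preserves any Clifford-like
parallelism -/
lemma mult_preserves (hcenter : CenterEqF F H) (hdim : Module.finrank F H = 4)
    {par : Line F H → Line F H → Prop} (hE : Equivalence par)
    (hdich : ∀ M : Line F H,
      parClass F H par M = leftClass F H M ∨ parClass F H par M = rightClass F H M)
    (γ : H ≃ₗ[F] H) (hmul : ∀ x y : H, γ (x * y) = γ x * γ y)
    {M N : Line F H} (h : par M N) : par (mapLine γ M) (mapLine γ N) := by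
  have hγ1 : γ 1 = 1 := gamma_mul_one γ hmul
  obtain ⟨m₀, hm₀M, hm₀⟩ := line_exists_ne_zero M
  obtain ⟨n₀, hn₀N, hn₀⟩ := line_exists_ne_zero N
  rcases hdich M with hM | hM
  · -- left case
    -- K := m₀⁻¹ M, a field line
    have hMK : LeftPar F H M.1 (mapLine (lmulE (F := F) m₀⁻¹ (inv_ne_zero hm₀)) M).1 :=
      ⟨m₀⁻¹, inv_ne_zero hm₀, by rw [lmulLine_coe]⟩
    set K := mapLine (lmulE (F := F) m₀⁻¹ (inv_ne_zero hm₀)) M with hKdef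
    have hK1 : (1:H) ∈ K.1 := by
      have : (1:H) ∈ (K.1 : Set H) := by
        rw [hKdef, lmulLine_coe]
        exact ⟨m₀, hm₀M, inv_mul_cancel₀ hm₀⟩
      exact this
    have hKF : parClass F H par K = leftClass F H K := parClass_left_transport hE hM hMK
    -- generator of K and the conjugating element
    obtain ⟨u, huK, hu, hKs⟩ := exists_gen hdim K.2 hK1
    obtain ⟨c, hc, hconj⟩ := gamma_conj_elem hcenter hdim γ hγ1 hu (hmul u u)
    have hKconj : mapLine γ K = conjLine c hc K :=
      gamma_line_eq_conj hcenter hdim γ hγ1 hu hc hconj hKs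
    have hK1' : (1:H) ∈ (mapLine γ K).1 := gamma_one_mem γ hγ1 hK1
    have hKF' : parClass F H par (mapLine γ K) = leftClass F H (mapLine γ K) := by
      rw [hKconj]
      exact inF_conj hcenter hdim hE hdich hK1 hc hKF
    -- γM and γN are left cosets of γK
    have hMco : (M.1 : Set H) = (fun m => m₀ * m) '' (K.1 : Set H) :=
      left_coset_through hcenter hdim hK1 hMK hm₀M hm₀
    have hNK : LeftPar F H N.1 K.1 := by
      have hNM : LeftPar F H N.1 M.1 := by
        have : N ∈ parClass F H par M := hE.symm h
        rw [hM] at this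
        exact this
      exact leftPar_trans hNM hMK
    have hNco : (N.1 : Set H) = (fun m => n₀ * m) '' (K.1 : Set H) :=
      left_coset_through hcenter hdim hK1 hNK hn₀N hn₀
    have himgM : ((mapLine γ M).1 : Set H)
        = (fun m => γ m₀ * m) '' ((mapLine γ K).1 : Set H) := by
      rw [mapLine_coe γ M, hMco, gamma_image_left hmul, ← mapLine_coe γ K]
    have hgM : LeftPar F H (mapLine γ M).1 (mapLine γ K).1 := by
      refine ⟨(γ m₀)⁻¹, inv_ne_zero (gamma_ne_zero γ hm₀), ?_⟩
      rw [himgM, image_left_left, inv_mul_cancel₀ (gamma_ne_zero γ hm₀), image_one_left]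
    have himgN : ((mapLine γ N).1 : Set H)
        = (fun m => γ n₀ * m) '' ((mapLine γ K).1 : Set H) := by
      rw [mapLine_coe γ N, hNco, gamma_image_left hmul, ← mapLine_coe γ K]
    have hgN : LeftPar F H (mapLine γ N).1 (mapLine γ K).1 := by
      refine ⟨(γ n₀)⁻¹, inv_ne_zero (gamma_ne_zero γ hn₀), ?_⟩
      rw [himgN, image_left_left, inv_mul_cancel₀ (gamma_ne_zero γ hn₀), image_one_left]
    have hp1 : par (mapLine γ M) (mapLine γ K) := by
      have : mapLine γ M ∈ parClass F H par (mapLine γ K) := by rw [hKF']; exact hgM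
      exact this
    have hp2 : par (mapLine γ N) (mapLine γ K) := by
      have : mapLine γ N ∈ parClass F H par (mapLine γ K) := by rw [hKF']; exact hgN
      exact this
    exact hE.trans hp1 (hE.symm hp2)
  · -- right case
    have hMK : RightPar F H M.1 (mapLine (rmulE (F := F) m₀⁻¹ (inv_ne_zero hm₀)) M).1 :=
      ⟨m₀⁻¹, inv_ne_zero hm₀, by rw [rmulLine_coe]⟩
    set K := mapLine (rmulE (F := F) m₀⁻¹ (inv_ne_zero hm₀)) M with hKdef
    have hK1 : (1:H) ∈ K.1 := by
      have : (1:H) ∈ (K.1 : Set H) := by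
        rw [hKdef, rmulLine_coe]
        exact ⟨m₀, hm₀M, mul_inv_cancel₀ hm₀⟩
      exact this
    have hKF : parClass F H par K = rightClass F H K := parClass_right_transport hE hM hMK
    obtain ⟨u, huK, hu, hKs⟩ := exists_gen hdim K.2 hK1
    obtain ⟨c, hc, hconj⟩ := gamma_conj_elem hcenter hdim γ hγ1 hu (hmul u u)
    have hKconj : mapLine γ K = conjLine c hc K :=
      gamma_line_eq_conj hcenter hdim γ hγ1 hu hc hconj hKs
    have hK1' : (1:H) ∈ (mapLine γ K).1 := gamma_one_mem γ hγ1 hK1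
    have hKF' : parClass F H par (mapLine γ K) = rightClass F H (mapLine γ K) := by
      rcases hdich (mapLine γ K) with hL | hR
      · exfalso
        have : parClass F H par K = leftClass F H K := by
          rw [hKconj] at hL
          exact (inF_conj_iff hcenter hdim hE hdich hK1 hc).2 hL
        exact notboth hcenter hdim hK1 hK1 (this.symm.trans hKF)
      · exact hR
    have hMco : (M.1 : Set H) = (fun m => m * m₀) '' (K.1 : Set H) :=
      right_coset_through hcenter hdim hK1 hMK hm₀M hm₀
    have hNK : RightPar F H N.1 K.1 := by
      have hNM : RightPar F H N.1 M.1 := by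
        have : N ∈ parClass F H par M := hE.symm h
        rw [hM] at this
        exact this
      exact rightPar_trans hNM hMK
    have hNco : (N.1 : Set H) = (fun m => m * n₀) '' (K.1 : Set H) :=
      right_coset_through hcenter hdim hK1 hNK hn₀N hn₀
    have himgM : ((mapLine γ M).1 : Set H)
        = (fun m => m * γ m₀) '' ((mapLine γ K).1 : Set H) := by
      rw [mapLine_coe γ M, hMco, gamma_image_right hmul, ← mapLine_coe γ K]
    have hgM : RightPar F H (mapLine γ M).1 (mapLine γ K).1 := by
      refine ⟨(γ m₀)⁻¹, inv_ne_zero (gamma_ne_zero γ hm₀), ?_⟩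
      rw [himgM, image_right_right, mul_inv_cancel₀ (gamma_ne_zero γ hm₀), image_one_right]
    have himgN : ((mapLine γ N).1 : Set H)
        = (fun m => m * γ n₀) '' ((mapLine γ K).1 : Set H) := by
      rw [mapLine_coe γ N, hNco, gamma_image_right hmul, ← mapLine_coe γ K]
    have hgN : RightPar F H (mapLine γ N).1 (mapLine γ K).1 := by
      refine ⟨(γ n₀)⁻¹, inv_ne_zero (gamma_ne_zero γ hn₀), ?_⟩
      rw [himgN, image_right_right, mul_inv_cancel₀ (gamma_ne_zero γ hn₀), image_one_right]
    have hp1 : par (mapLine γ M) (mapLine γ K) := by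
      have : mapLine γ M ∈ parClass F H par (mapLine γ K) := by rw [hKF']; exact hgM
      exact this
    have hp2 : par (mapLine γ N) (mapLine γ K) := by
      have : mapLine γ N ∈ parClass F H par (mapLine γ K) := by rw [hKF']; exact hgN
      exact this
    exact hE.trans hp1 (hE.symm hp2)

end CLP
namespace CLP
variable {F H : Type*} [Field F] [DivisionRing H] [Algebra F H]

lemma type_lemma (hcenter : CenterEqF F H) (hdim : Module.finrank F H = 4)
    {par : Line F H → Line F H → Prop} (hE : Equivalence par)
    (hdich : ∀ M : Line F H,
      parClass F H par M = leftClass F H M ∨ parClass F H par M = rightClass F H M)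
    (γ : H ≃ₗ[F] H) (hγ1 : γ 1 = 1)
    (hpres : ∀ M N : Line F H, par M N → par (mapLine γ M) (mapLine γ N))
    {u : H} (hu : u ∉ Submodule.span F ({1} : Set H)) :
    (∀ g : H, γ (g * u) = γ g * γ u) ∨ (∀ g : H, γ (u * g) = γ u * γ g) ∨
    (∀ g : H, γ (g * u) = γ u * γ g) ∨ (∀ g : H, γ (u * g) = γ g * γ u) := by
  set K : Line F H := ⟨Submodule.span F ({1, u} : Set H), finrank_span_one_pair hdim hu⟩
    with hKdef
  have hK1 : (1:H) ∈ K.1 := Submodule.subset_span (by simp)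
  have huK : u ∈ K.1 := Submodule.subset_span (by simp)
  have hK'span : (mapLine γ K).1 = Submodule.span F ({1, γ u} : Set H) :=
    gamma_span_pair γ hγ1 u
  have hγu : γ u ∉ Submodule.span F ({1} : Set H) := gamma_not_fone γ hγ1 hu
  have hK1' : (1:H) ∈ (mapLine γ K).1 := gamma_one_mem γ hγ1 hK1
  -- common ingredients
  have hcoeff : ∀ x : H, x ∈ ((mapLine γ K).1 : Set H) → ∃ a b : F, x = a • 1 + b • γ u := by
    intro x hx
    have : x ∈ (mapLine γ K).1 := hx
    rw [hK'span, mem_span_one] at this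
    exact this
  rcases hdich K with hKl | hKr
  · -- lines g·K are in the par class of K
    have hline : ∀ (g : H) (hg : g ≠ 0), par (mapLine (lmulE (F := F) g hg) K) K := by
      intro g hg
      have : mapLine (lmulE (F := F) g hg) K ∈ parClass F H par K := by
        rw [hKl]
        exact ⟨g⁻¹, inv_ne_zero hg, by
          rw [lmulLine_coe, image_left_left, inv_mul_cancel₀ hg, image_one_left]⟩
      exact this
    have hmemγg : ∀ (g : H) (hg : g ≠ 0),
        γ g ∈ ((mapLine γ (mapLine (lmulE (F := F) g hg) K)).1 : Set H) := by
      intro g hg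
      rw [mapLine_coe]
      exact ⟨g, by
        show g ∈ ((mapLine (lmulE (F := F) g hg) K).1 : Set H)
        rw [lmulLine_coe]
        exact ⟨1, hK1, mul_one g⟩, rfl⟩
    have hmemγgu : ∀ (g : H) (hg : g ≠ 0),
        γ (g * u) ∈ ((mapLine γ (mapLine (lmulE (F := F) g hg) K)).1 : Set H) := by
      intro g hg
      rw [mapLine_coe]
      exact ⟨g * u, by
        show g * u ∈ ((mapLine (lmulE (F := F) g hg) K).1 : Set H)
        rw [lmulLine_coe]
        exact ⟨u, huK, rfl⟩, rfl⟩
    rcases hdich (mapLine γ K) with hK'l | hK'r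
    · -- case LL : γ(g u) = γ g γ u
      left
      have hrepr : ∀ (g : H) (hg : g ≠ 0), ∃ a b : F,
          γ (g * u) = a • γ g + b • (γ g * γ u) := by
        intro g hg
        have hpar' := hpres _ _ (hline g hg)
        have hlp : LeftPar F H (mapLine γ (mapLine (lmulE (F := F) g hg) K)).1
            (mapLine γ K).1 := by
          have : mapLine γ (mapLine (lmulE (F := F) g hg) K)
              ∈ parClass F H par (mapLine γ K) := hpar'
          rw [hK'l] at this
          exact this
        have hcos := left_coset_through hcenter hdim hK1' hlp (hmemγg g hg)
          (gamma_ne_zero γ hg)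
        have hx := hmemγgu g hg
        rw [hcos] at hx
        obtain ⟨k, hk, hkeq⟩ := hx
        obtain ⟨a, b, rfl⟩ := hcoeff k hk
        refine ⟨a, b, ?_⟩
        rw [← hkeq]
        show γ g * (a • 1 + b • γ u) = a • γ g + b • (γ g * γ u)
        rw [mul_add, mul_smul_comm, mul_smul_comm, mul_one]
      -- constancy of coefficients
      obtain ⟨c, d, hcd⟩ := const_coeffs_right hcenter hdim hγu
        (S := fun y => γ (γ.symm y * u))
        (fun y z => by
          show γ (γ.symm (y + z) * u) = γ (γ.symm y * u) + γ (γ.symm z * u)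
          rw [map_add, add_mul, map_add])
        (by
          intro y
          rcases eq_or_ne y 0 with rfl | hy
          · exact ⟨0, 0, by simp⟩
          · obtain ⟨a, b, hab⟩ := hrepr (γ.symm y)
              (fun hz => hy (by simpa using congrArg γ hz))
            exact ⟨a, b, by
              show γ (γ.symm y * u) = a • y + b • (y * γ u)
              rw [hab, LinearEquiv.apply_symm_apply]⟩)
      have hform : ∀ g : H, γ (g * u) = c • γ g + d • (γ g * γ u) := by
        intro g
        have h := hcd (γ g)
        simp only [LinearEquiv.symm_apply_apply] at h
        exact h
      have h1 := hform 1
      rw [one_mul, hγ1, one_mul] at h1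
      have hz : c • (1:H) + (d - 1) • γ u = 0 := by
        linear_combination (norm := module) -h1
      obtain ⟨hc0, hd1⟩ := pair_zero hγu hz
      intro g
      rw [hform g, hc0, sub_eq_zero.1 hd1]
      module
    · -- case LR : γ(g u) = γ u γ g
      right; right; left
      have hrepr : ∀ (g : H) (hg : g ≠ 0), ∃ a b : F,
          γ (g * u) = a • γ g + b • (γ u * γ g) := by
        intro g hg
        have hpar' := hpres _ _ (hline g hg)
        have hlp : RightPar F H (mapLine γ (mapLine (lmulE (F := F) g hg) K)).1
            (mapLine γ K).1 := by
          have : mapLine γ (mapLine (lmulE (F := F) g hg) K)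
              ∈ parClass F H par (mapLine γ K) := hpar'
          rw [hK'r] at this
          exact this
        have hcos := right_coset_through hcenter hdim hK1' hlp (hmemγg g hg)
          (gamma_ne_zero γ hg)
        have hx := hmemγgu g hg
        rw [hcos] at hx
        obtain ⟨k, hk, hkeq⟩ := hx
        obtain ⟨a, b, rfl⟩ := hcoeff k hk
        refine ⟨a, b, ?_⟩
        rw [← hkeq]
        show (a • 1 + b • γ u) * γ g = a • γ g + b • (γ u * γ g)
        rw [add_mul, smul_mul_assoc, smul_mul_assoc, one_mul]
      obtain ⟨c, d, hcd⟩ := const_coeffs_left hcenter hdim hγu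
        (S := fun y => γ (γ.symm y * u))
        (fun y z => by
          show γ (γ.symm (y + z) * u) = γ (γ.symm y * u) + γ (γ.symm z * u)
          rw [map_add, add_mul, map_add])
        (by
          intro y
          rcases eq_or_ne y 0 with rfl | hy
          · exact ⟨0, 0, by simp⟩
          · obtain ⟨a, b, hab⟩ := hrepr (γ.symm y)
              (fun hz => hy (by simpa using congrArg γ hz))
            exact ⟨a, b, by
              show γ (γ.symm y * u) = a • y + b • (γ u * y)
              rw [hab, LinearEquiv.apply_symm_apply]⟩)
      have hform : ∀ g : H, γ (g * u) = c • γ g + d • (γ u * γ g) := by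
        intro g
        have h := hcd (γ g)
        simp only [LinearEquiv.symm_apply_apply] at h
        exact h
      have h1 := hform 1
      rw [one_mul, hγ1, mul_one] at h1
      have hz : c • (1:H) + (d - 1) • γ u = 0 := by
        linear_combination (norm := module) -h1
      obtain ⟨hc0, hd1⟩ := pair_zero hγu hz
      intro g
      rw [hform g, hc0, sub_eq_zero.1 hd1]
      module
  · -- right class case : lines K·g
    have hline : ∀ (g : H) (hg : g ≠ 0), par (mapLine (rmulE (F := F) g hg) K) K := by
      intro g hg
      have : mapLine (rmulE (F := F) g hg) K ∈ parClass F H par K := by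
        rw [hKr]
        exact ⟨g⁻¹, inv_ne_zero hg, by
          rw [rmulLine_coe, image_right_right, mul_inv_cancel₀ hg, image_one_right]⟩
      exact this
    have hmemγg : ∀ (g : H) (hg : g ≠ 0),
        γ g ∈ ((mapLine γ (mapLine (rmulE (F := F) g hg) K)).1 : Set H) := by
      intro g hg
      rw [mapLine_coe]
      exact ⟨g, by
        show g ∈ ((mapLine (rmulE (F := F) g hg) K).1 : Set H)
        rw [rmulLine_coe]
        exact ⟨1, hK1, one_mul g⟩, rfl⟩
    have hmemγug : ∀ (g : H) (hg : g ≠ 0),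
        γ (u * g) ∈ ((mapLine γ (mapLine (rmulE (F := F) g hg) K)).1 : Set H) := by
      intro g hg
      rw [mapLine_coe]
      exact ⟨u * g, by
        show u * g ∈ ((mapLine (rmulE (F := F) g hg) K).1 : Set H)
        rw [rmulLine_coe]
        exact ⟨u, huK, rfl⟩, rfl⟩
    rcases hdich (mapLine γ K) with hK'l | hK'r
    · -- case RL : γ(u g) = γ g γ u
      right; right; right
      have hrepr : ∀ (g : H) (hg : g ≠ 0), ∃ a b : F,
          γ (u * g) = a • γ g + b • (γ g * γ u) := by
        intro g hg
        have hpar' := hpres _ _ (hline g hg)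
        have hlp : LeftPar F H (mapLine γ (mapLine (rmulE (F := F) g hg) K)).1
            (mapLine γ K).1 := by
          have : mapLine γ (mapLine (rmulE (F := F) g hg) K)
              ∈ parClass F H par (mapLine γ K) := hpar'
          rw [hK'l] at this
          exact this
        have hcos := left_coset_through hcenter hdim hK1' hlp (hmemγg g hg)
          (gamma_ne_zero γ hg)
        have hx := hmemγug g hg
        rw [hcos] at hx
        obtain ⟨k, hk, hkeq⟩ := hx
        obtain ⟨a, b, rfl⟩ := hcoeff k hk
        refine ⟨a, b, ?_⟩
        rw [← hkeq]
        show γ g * (a • 1 + b • γ u) = a • γ g + b • (γ g * γ u)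
        rw [mul_add, mul_smul_comm, mul_smul_comm, mul_one]
      obtain ⟨c, d, hcd⟩ := const_coeffs_right hcenter hdim hγu
        (S := fun y => γ (u * γ.symm y))
        (fun y z => by
          show γ (u * γ.symm (y + z)) = γ (u * γ.symm y) + γ (u * γ.symm z)
          rw [map_add, mul_add, map_add])
        (by
          intro y
          rcases eq_or_ne y 0 with rfl | hy
          · exact ⟨0, 0, by simp⟩
          · obtain ⟨a, b, hab⟩ := hrepr (γ.symm y)
              (fun hz => hy (by simpa using congrArg γ hz))
            exact ⟨a, b, by
              show γ (u * γ.symm y) = a • y + b • (y * γ u)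
              rw [hab, LinearEquiv.apply_symm_apply]⟩)
      have hform : ∀ g : H, γ (u * g) = c • γ g + d • (γ g * γ u) := by
        intro g
        have h := hcd (γ g)
        simp only [LinearEquiv.symm_apply_apply] at h
        exact h
      have h1 := hform 1
      rw [mul_one, hγ1, one_mul] at h1
      have hz : c • (1:H) + (d - 1) • γ u = 0 := by
        linear_combination (norm := module) -h1
      obtain ⟨hc0, hd1⟩ := pair_zero hγu hz
      intro g
      rw [hform g, hc0, sub_eq_zero.1 hd1]
      module
    · -- case RR : γ(u g) = γ u γ g
      right; left
      have hrepr : ∀ (g : H) (hg : g ≠ 0), ∃ a b : F,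
          γ (u * g) = a • γ g + b • (γ u * γ g) := by
        intro g hg
        have hpar' := hpres _ _ (hline g hg)
        have hlp : RightPar F H (mapLine γ (mapLine (rmulE (F := F) g hg) K)).1
            (mapLine γ K).1 := by
          have : mapLine γ (mapLine (rmulE (F := F) g hg) K)
              ∈ parClass F H par (mapLine γ K) := hpar'
          rw [hK'r] at this
          exact this
        have hcos := right_coset_through hcenter hdim hK1' hlp (hmemγg g hg)
          (gamma_ne_zero γ hg)
        have hx := hmemγug g hg
        rw [hcos] at hx
        obtain ⟨k, hk, hkeq⟩ := hx
        obtain ⟨a, b, rfl⟩ := hcoeff k hk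
        refine ⟨a, b, ?_⟩
        rw [← hkeq]
        show (a • 1 + b • γ u) * γ g = a • γ g + b • (γ u * γ g)
        rw [add_mul, smul_mul_assoc, smul_mul_assoc, one_mul]
      obtain ⟨c, d, hcd⟩ := const_coeffs_left hcenter hdim hγu
        (S := fun y => γ (u * γ.symm y))
        (fun y z => by
          show γ (u * γ.symm (y + z)) = γ (u * γ.symm y) + γ (u * γ.symm z)
          rw [map_add, mul_add, map_add])
        (by
          intro y
          rcases eq_or_ne y 0 with rfl | hy
          · exact ⟨0, 0, by simp⟩
          · obtain ⟨a, b, hab⟩ := hrepr (γ.symm y)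
              (fun hz => hy (by simpa using congrArg γ hz))
            exact ⟨a, b, by
              show γ (u * γ.symm y) = a • y + b • (γ u * y)
              rw [hab, LinearEquiv.apply_symm_apply]⟩)
      have hform : ∀ g : H, γ (u * g) = c • γ g + d • (γ u * γ g) := by
        intro g
        have h := hcd (γ g)
        simp only [LinearEquiv.symm_apply_apply] at h
        exact h
      have h1 := hform 1
      rw [mul_one, hγ1, mul_one] at h1
      have hz : c • (1:H) + (d - 1) • γ u = 0 := by
        linear_combination (norm := module) -h1
      obtain ⟨hc0, hd1⟩ := pair_zero hγu hz
      intro g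
      rw [hform g, hc0, sub_eq_zero.1 hd1]
      module

end CLP
namespace CLP
variable {F H : Type*} [Field F] [DivisionRing H] [Algebra F H]

lemma preserved_implies_mult (hcenter : CenterEqF F H) (hdim : Module.finrank F H = 4)
    {par : Line F H → Line F H → Prop} (hE : Equivalence par)
    (hdich : ∀ M : Line F H,
      parClass F H par M = leftClass F H M ∨ parClass F H par M = rightClass F H M)
    (γ : H ≃ₗ[F] H) (hγ1 : γ 1 = 1)
    (hpres : ∀ M N : Line F H, par M N → par (mapLine γ M) (mapLine γ N)) :
    ∀ x y : H, γ (x * y) = γ x * γ y := by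
  have htype : ∀ {u : H}, u ∉ Submodule.span F ({1} : Set H) →
      (∀ g : H, γ (g * u) = γ g * γ u) ∨ (∀ g : H, γ (u * g) = γ u * γ g) ∨
      (∀ g : H, γ (g * u) = γ u * γ g) ∨ (∀ g : H, γ (u * g) = γ g * γ u) :=
    fun hu => type_lemma hcenter hdim hE hdich γ hγ1 hpres hu
  have hdecomp : ∀ {u v : H}, v ∈ Submodule.span F ({1, u} : Set H) →
      ∃ a b : F, v = a • 1 + b • u ∧ γ v = a • 1 + b • γ u := by
    intro u v hv
    rw [mem_span_one] at hv
    obtain ⟨a, b, rfl⟩ := hv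
    exact ⟨a, b, rfl, by rw [map_add, map_smul, map_smul, hγ1]⟩
  have harg : ∀ (g : H) (a b : F) (u : H), g * (a • 1 + b • u) = a • g + b • (g * u) := by
    intro g a b u
    rw [mul_add, mul_smul_comm, mul_smul_comm, mul_one]
  have harg' : ∀ (g : H) (a b : F) (u : H), (a • 1 + b • u) * g = a • g + b • (u * g) := by
    intro g a b u
    rw [add_mul, smul_mul_assoc, smul_mul_assoc, one_mul]
  have hLext : ∀ {u v : H}, (∀ g : H, γ (g * u) = γ g * γ u) →
      v ∈ Submodule.span F ({1, u} : Set H) → ∀ g : H, γ (g * v) = γ g * γ v := by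
    intro u v hL hv g
    obtain ⟨a, b, hv1, hv2⟩ := hdecomp hv
    rw [hv2, hv1, harg, map_add, map_smul, map_smul, hL g, harg]
  have hRext : ∀ {u v : H}, (∀ g : H, γ (u * g) = γ u * γ g) →
      v ∈ Submodule.span F ({1, u} : Set H) → ∀ g : H, γ (v * g) = γ v * γ g := by
    intro u v hR hv g
    obtain ⟨a, b, hv1, hv2⟩ := hdecomp hv
    rw [hv2, hv1, harg', map_add, map_smul, map_smul, hR g, harg']
  have hRaext : ∀ {u v : H}, (∀ g : H, γ (u * g) = γ g * γ u) →
      v ∈ Submodule.span F ({1, u} : Set H) → ∀ g : H, γ (v * g) = γ g * γ v := by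
    intro u v hR hv g
    obtain ⟨a, b, hv1, hv2⟩ := hdecomp hv
    rw [hv2, hv1, harg', map_add, map_smul, map_smul, hR g, harg]
  have hcomm_mem : ∀ {u v : H}, u ∉ Submodule.span F ({1} : Set H) →
      u * v = v * u → v ∈ Submodule.span F ({1, u} : Set H) :=
    fun hu h => centralizer_line hcenter hdim hu h
  have hgcomm_mem : ∀ {u v : H}, u ∉ Submodule.span F ({1} : Set H) →
      γ u * γ v = γ v * γ u → v ∈ Submodule.span F ({1, u} : Set H) := by
    intro u v hu h
    have hγu := gamma_not_fone γ hγ1 hu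
    have hmem := centralizer_line hcenter hdim hγu h
    rw [mem_span_one] at hmem
    obtain ⟨a, b, hab⟩ := hmem
    have : γ v = γ (a • 1 + b • u) := by
      rw [map_add, map_smul, map_smul, hγ1, hab]
    rw [mem_span_one]
    exact ⟨a, b, γ.injective this⟩
  by_cases hall : ∀ v : H, v ∉ Submodule.span F ({1} : Set H) →
      (∀ g : H, γ (g * v) = γ g * γ v) ∨ (∀ g : H, γ (v * g) = γ v * γ g)
  · -- multiplicative case
    have hinv : ∀ w : H, w ≠ 0 → γ w⁻¹ = (γ w)⁻¹ := by
      intro w hw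
      by_cases hwF : w ∈ Submodule.span F ({1} : Set H)
      · rw [mem_fone] at hwF
        obtain ⟨a, rfl⟩ := hwF
        have ha : a ≠ 0 := by rintro rfl; simp at hw
        have h1 : (a • (1:H))⁻¹ = a⁻¹ • 1 := by
          rw [Algebra.smul_def, Algebra.smul_def, mul_one, mul_one, map_inv₀]
        rw [h1, gamma_smul_one γ hγ1, gamma_smul_one γ hγ1, h1]
      · rcases hall w hwF with hL | hR
        · have := hL w⁻¹
          rw [inv_mul_cancel₀ hw, hγ1] at this
          exact eq_inv_of_mul_eq_one_left this.symm
        · have := hR w⁻¹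
          rw [mul_inv_cancel₀ hw, hγ1] at this
          exact eq_inv_of_mul_eq_one_right this.symm
    intro x y
    rcases eq_or_ne x 0 with rfl | hx0
    · simp
    rcases eq_or_ne y 0 with rfl | hy0
    · simp
    by_cases hyF : y ∈ Submodule.span F ({1} : Set H)
    · rw [mem_fone] at hyF
      obtain ⟨a, rfl⟩ := hyF
      have h1 : x * (a • 1) = a • x := by rw [mul_smul_comm, mul_one]
      rw [h1, map_smul, gamma_smul_one γ hγ1, mul_smul_comm, mul_one]
    rcases hall y hyF with hL | hR
    · exact hL x
    · by_cases hxF : x ∈ Submodule.span F ({1} : Set H)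
      · rw [mem_fone] at hxF
        obtain ⟨a, rfl⟩ := hxF
        have h1 : (a • (1:H)) * y = a • y := by rw [smul_mul_assoc, one_mul]
        rw [h1, map_smul, gamma_smul_one γ hγ1, smul_mul_assoc, one_mul]
      · have hy1 : y⁻¹ ∈ Submodule.span F ({1, y} : Set H) :=
          line_inv_mem hcenter hdim (finrank_span_one_pair hdim hyF)
            (Submodule.subset_span (by simp)) (Submodule.subset_span (by simp)) hy0
        have hRy : ∀ g : H, γ (y⁻¹ * g) = γ y⁻¹ * γ g := hRext hR hy1
        have hxyne : x * y ≠ 0 := mul_ne_zero hx0 hy0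
        have e1 : γ ((x * y)⁻¹) = (γ y)⁻¹ * (γ x)⁻¹ := by
          rw [mul_inv_rev, hRy x⁻¹, hinv y hy0, hinv x hx0]
        have e2 : γ (x * y) = (γ ((x * y)⁻¹))⁻¹ := by
          conv_lhs => rw [← inv_inv (x * y)]
          rw [hinv _ (inv_ne_zero hxyne)]
        rw [e2, e1, mul_inv_rev, inv_inv, inv_inv]
  · exfalso
    -- some element is of anti type, hence all are, hence γ is an antiautomorphism
    obtain ⟨v, hv⟩ := not_forall.1 hall
    obtain ⟨hvF, hvnot⟩ := Classical.not_imp.1 hv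
    have hvanti : (∀ g : H, γ (g * v) = γ v * γ g) ∨ (∀ g : H, γ (v * g) = γ g * γ v) := by
      rcases htype hvF with h | h | h | h
      · exact absurd (Or.inl h) hvnot
      · exact absurd (Or.inr h) hvnot
      · exact Or.inl h
      · exact Or.inr h
    have hallanti : ∀ u : H, u ∉ Submodule.span F ({1} : Set H) →
        (∀ g : H, γ (g * u) = γ u * γ g) ∨ (∀ g : H, γ (u * g) = γ g * γ u) := by
      intro u hu
      rcases htype hu with hL | hRm | h | h
      · exfalso
        have hvmem : v ∈ Submodule.span F ({1, u} : Set H) := by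
          rcases hvanti with hA | hA
          · exact hcomm_mem hu (γ.injective ((hA u).trans (hL v).symm))
          · exact hgcomm_mem hu ((hA u).symm.trans (hL v))
        have hLv := hLext hL hvmem
        apply hvnot
        left
        exact hLv
      · exfalso
        have hvmem : v ∈ Submodule.span F ({1, u} : Set H) := by
          rcases hvanti with hA | hA
          · exact hgcomm_mem hu ((hRm v).symm.trans (hA u))
          · exact hcomm_mem hu (γ.injective ((hRm v).trans (hA u).symm))
        have hRv := hRext hRm hvmem
        apply hvnot
        right
        exact hRv
      · exact Or.inl h
      · exact Or.inr h
    -- anti inverses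
    have hainv : ∀ w : H, w ≠ 0 → γ w⁻¹ = (γ w)⁻¹ := by
      intro w hw
      by_cases hwF : w ∈ Submodule.span F ({1} : Set H)
      · rw [mem_fone] at hwF
        obtain ⟨a, rfl⟩ := hwF
        have ha : a ≠ 0 := by rintro rfl; simp at hw
        have h1 : (a • (1:H))⁻¹ = a⁻¹ • 1 := by
          rw [Algebra.smul_def, Algebra.smul_def, mul_one, mul_one, map_inv₀]
        rw [h1, gamma_smul_one γ hγ1, gamma_smul_one γ hγ1, h1]
      · rcases hallanti w hwF with hL | hR
        · have := hL w⁻¹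
          rw [inv_mul_cancel₀ hw, hγ1] at this
          exact eq_inv_of_mul_eq_one_right this.symm
        · have := hR w⁻¹
          rw [mul_inv_cancel₀ hw, hγ1] at this
          exact eq_inv_of_mul_eq_one_left this.symm
    -- γ is anti-multiplicative
    have hanti : ∀ x y : H, γ (x * y) = γ y * γ x := by
      intro x y
      rcases eq_or_ne x 0 with rfl | hx0
      · simp
      rcases eq_or_ne y 0 with rfl | hy0
      · simp
      by_cases hyF : y ∈ Submodule.span F ({1} : Set H)
      · rw [mem_fone] at hyF
        obtain ⟨a, rfl⟩ := hyF
        have h1 : x * (a • 1) = a • x := by rw [mul_smul_comm, mul_one]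
        rw [h1, map_smul, gamma_smul_one γ hγ1, smul_mul_assoc, one_mul]
      rcases hallanti y hyF with hL | hR
      · exact hL x
      · by_cases hxF : x ∈ Submodule.span F ({1} : Set H)
        · rw [mem_fone] at hxF
          obtain ⟨a, rfl⟩ := hxF
          have h1 : (a • (1:H)) * y = a • y := by rw [smul_mul_assoc, one_mul]
          rw [h1, map_smul, gamma_smul_one γ hγ1, mul_smul_comm, mul_one]
        · have hy1 : y⁻¹ ∈ Submodule.span F ({1, y} : Set H) :=
            line_inv_mem hcenter hdim (finrank_span_one_pair hdim hyF)
              (Submodule.subset_span (by simp)) (Submodule.subset_span (by simp)) hy0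
          have hRy : ∀ g : H, γ (y⁻¹ * g) = γ g * γ y⁻¹ := hRaext hR hy1
          have hxyne : x * y ≠ 0 := mul_ne_zero hx0 hy0
          have e1 : γ ((x * y)⁻¹) = (γ x)⁻¹ * (γ y)⁻¹ := by
            rw [mul_inv_rev, hRy x⁻¹, hainv y hy0, hainv x hx0]
          have e2 : γ (x * y) = (γ ((x * y)⁻¹))⁻¹ := by
            conv_lhs => rw [← inv_inv (x * y)]
            rw [hainv _ (inv_ne_zero hxyne)]
          rw [e2, e1, mul_inv_rev, inv_inv, inv_inv]
    -- an antiautomorphism cannot preserve the parallelism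
    obtain ⟨u, hu⟩ := exists_not_fone hdim
    set K : Line F H := ⟨Submodule.span F ({1, u} : Set H), finrank_span_one_pair hdim hu⟩
      with hKdef
    have hK1 : (1:H) ∈ K.1 := Submodule.subset_span (by simp)
    have huK : u ∈ K.1 := Submodule.subset_span (by simp)
    have hsq : γ (u * u) = γ u * γ u := hanti u u
    obtain ⟨c, hc, hconj⟩ := gamma_conj_elem hcenter hdim γ hγ1 hu hsq
    have hKconj : mapLine γ K = conjLine c hc K :=
      gamma_line_eq_conj hcenter hdim γ hγ1 hu hc hconj rfl
    have hK1' : (1:H) ∈ (mapLine γ K).1 := gamma_one_mem γ hγ1 hK1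
    rcases hdich K with hKl | hKr
    · -- left case
      have hK'F : parClass F H par (mapLine γ K) = leftClass F H (mapLine γ K) := by
        rw [hKconj]
        exact inF_conj hcenter hdim hE hdich hK1 hc hKl
      apply no_normal_line hcenter hdim (mapLine γ K).2 hK1'
      intro h hh x hx
      have hg : γ.symm h ≠ 0 := fun hz => hh (by
        rw [← LinearEquiv.apply_symm_apply γ h, hz, map_zero])
      have hgl : γ (γ.symm h) = h := LinearEquiv.apply_symm_apply γ h
      have hpargK : par (mapLine (lmulE (F := F) (γ.symm h) hg) K) K := by
        have : mapLine (lmulE (F := F) (γ.symm h) hg) K ∈ parClass F H par K := by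
          rw [hKl]
          exact ⟨(γ.symm h)⁻¹, inv_ne_zero hg, by
            rw [lmulLine_coe, image_left_left, inv_mul_cancel₀ hg, image_one_left]⟩
        exact this
      have him := hpres _ _ hpargK
      have hlp : LeftPar F H (mapLine γ (mapLine (lmulE (F := F) (γ.symm h) hg) K)).1
          (mapLine γ K).1 := by
        have : mapLine γ (mapLine (lmulE (F := F) (γ.symm h) hg) K)
            ∈ parClass F H par (mapLine γ K) := him
        rw [hK'F] at this
        exact this
      have hptmem : h ∈ ((mapLine γ (mapLine (lmulE (F := F) (γ.symm h) hg) K)).1 : Set H) := by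
        rw [mapLine_coe]
        exact ⟨γ.symm h, by
          show γ.symm h ∈ ((mapLine (lmulE (F := F) (γ.symm h) hg) K).1 : Set H)
          rw [lmulLine_coe]
          exact ⟨1, hK1, mul_one _⟩, hgl⟩
      have hcosL := left_coset_through hcenter hdim hK1' hlp hptmem hh
      have hcosR : ((mapLine γ (mapLine (lmulE (F := F) (γ.symm h) hg) K)).1 : Set H)
          = (fun m => m * h) '' ((mapLine γ K).1 : Set H) := by
        rw [mapLine_coe γ (mapLine (lmulE (F := F) (γ.symm h) hg) K), lmulLine_coe,
          mapLine_coe γ K]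
        rw [Set.image_image, Set.image_image]
        apply Set.image_congr
        intro k hk
        show γ (γ.symm h * k) = γ k * h
        rw [hanti (γ.symm h) k, hgl]
      have hmem2 : h * x ∈ (fun m => m * h) '' ((mapLine γ K).1 : Set H) := by
        rw [← hcosR, hcosL]
        exact ⟨x, hx, rfl⟩
      obtain ⟨y, hy, hyx⟩ := hmem2
      exact ⟨y, hy, hyx.symm⟩
    · -- right case
      have hK'F : parClass F H par (mapLine γ K) = rightClass F H (mapLine γ K) := by
        rcases hdich (mapLine γ K) with hL | hR
        · exfalso
          rw [hKconj] at hL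
          have := (inF_conj_iff hcenter hdim hE hdich hK1 hc).2 hL
          exact notboth hcenter hdim hK1 hK1 (this.symm.trans hKr)
        · exact hR
      apply no_normal_line hcenter hdim (mapLine γ K).2 hK1'
      intro h hh x hx
      have hg : γ.symm h ≠ 0 := fun hz => hh (by
        rw [← LinearEquiv.apply_symm_apply γ h, hz, map_zero])
      have hgl : γ (γ.symm h) = h := LinearEquiv.apply_symm_apply γ h
      have hpargK : par (mapLine (rmulE (F := F) (γ.symm h) hg) K) K := by
        have : mapLine (rmulE (F := F) (γ.symm h) hg) K ∈ parClass F H par K := by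
          rw [hKr]
          exact ⟨(γ.symm h)⁻¹, inv_ne_zero hg, by
            rw [rmulLine_coe, image_right_right, mul_inv_cancel₀ hg, image_one_right]⟩
        exact this
      have him := hpres _ _ hpargK
      have hlp : RightPar F H (mapLine γ (mapLine (rmulE (F := F) (γ.symm h) hg) K)).1
          (mapLine γ K).1 := by
        have : mapLine γ (mapLine (rmulE (F := F) (γ.symm h) hg) K)
            ∈ parClass F H par (mapLine γ K) := him
        rw [hK'F] at this
        exact this
      have hptmem : h ∈ ((mapLine γ (mapLine (rmulE (F := F) (γ.symm h) hg) K)).1 : Set H) := by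
        rw [mapLine_coe]
        exact ⟨γ.symm h, by
          show γ.symm h ∈ ((mapLine (rmulE (F := F) (γ.symm h) hg) K).1 : Set H)
          rw [rmulLine_coe]
          exact ⟨1, hK1, one_mul _⟩, hgl⟩
      have hcosR := right_coset_through hcenter hdim hK1' hlp hptmem hh
      have hcosL : ((mapLine γ (mapLine (rmulE (F := F) (γ.symm h) hg) K)).1 : Set H)
          = (fun m => h * m) '' ((mapLine γ K).1 : Set H) := by
        rw [mapLine_coe γ (mapLine (rmulE (F := F) (γ.symm h) hg) K), rmulLine_coe,
          mapLine_coe γ K]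
        rw [Set.image_image, Set.image_image]
        apply Set.image_congr
        intro k hk
        show γ (k * γ.symm h) = h * γ k
        rw [hanti k (γ.symm h), hgl]
      have hmem2 : h * x ∈ (fun m => m * h) '' ((mapLine γ K).1 : Set H) := by
        rw [← hcosR, hcosL]
        exact ⟨x, hx, rfl⟩
      obtain ⟨y, hy, hyx⟩ := hmem2
      exact ⟨y, hy, hyx.symm⟩

end CLP
namespace CLP
variable {F H : Type*} [Field F] [DivisionRing H] [Algebra F H]

lemma preserves_iff_mapLine (e : H ≃ₗ[F] H) (par : Line F H → Line F H → Prop) :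
    Preserves F H (⇑e) par ↔ ∀ M N : Line F H, par M N ↔ par (mapLine e M) (mapLine e N) := by
  constructor
  · intro hP M N
    exact hP M N (mapLine e M) (mapLine e N) (mapLine_coe e M) (mapLine_coe e N)
  · intro hP M N M' N' hM' hN'
    have hM'eq : M' = mapLine e M := line_ext (by rw [hM', mapLine_coe])
    have hN'eq : N' = mapLine e N := line_ext (by rw [hN', mapLine_coe])
    rw [hM'eq, hN'eq]
    exact hP M N

lemma mapLine_mapLine (e f : H ≃ₗ[F] H) (L : Line F H) :
    mapLine f (mapLine e L) = mapLine (e.trans f) L := by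
  apply line_ext
  rw [mapLine_coe, mapLine_coe, mapLine_coe, ← Set.image_comp]
  rfl

lemma mapLine_symm_cancel (γ : H ≃ₗ[F] H) (L : Line F H) :
    mapLine γ.symm (mapLine γ L) = L := by
  apply line_ext
  rw [mapLine_coe, mapLine_coe, Set.image_image]
  simp only [LinearEquiv.symm_apply_apply, Set.image_id']

lemma mult_preserves_leftPar (γ : H ≃ₗ[F] H)
    (hmul : ∀ x y : H, γ (x * y) = γ x * γ y) {M N : Line F H}
    (h : LeftPar F H M.1 N.1) : LeftPar F H (mapLine γ M).1 (mapLine γ N).1 := by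
  obtain ⟨g, hg, hgs⟩ := h
  refine ⟨γ g, gamma_ne_zero γ hg, ?_⟩
  rw [mapLine_coe, mapLine_coe, hgs, gamma_image_left hmul]

lemma lmul_leftPar {c : H} (hc : c ≠ 0) {M N : Line F H}
    (h : LeftPar F H M.1 N.1) :
    LeftPar F H (mapLine (lmulE (F := F) c hc) M).1 (mapLine (lmulE (F := F) c hc) N).1 := by
  obtain ⟨g, hg, hgs⟩ := h
  refine ⟨c * g * c⁻¹,
    mul_ne_zero (mul_ne_zero hc hg) (inv_ne_zero hc), ?_⟩
  rw [lmulLine_coe, lmulLine_coe, hgs, image_left_left, image_left_left]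
  simp only [mul_assoc, inv_mul_cancel_left₀ hc]

lemma symm_mult (γ : H ≃ₗ[F] H) (hmul : ∀ x y : H, γ (x * y) = γ x * γ y) :
    ∀ x y : H, γ.symm (x * y) = γ.symm x * γ.symm y := by
  intro x y
  apply γ.injective
  rw [hmul, LinearEquiv.apply_symm_apply, LinearEquiv.apply_symm_apply,
    LinearEquiv.apply_symm_apply]

end CLP

open CLP in
theorem linear_preserves_iff_preserves_left'
    {F H : Type*} [Field F] [DivisionRing H] [Algebra F H]
    (hcenter : CenterEqF F H) (hdim : Module.finrank F H = 4)
    (par : Line F H → Line F H → Prop) (hpar : IsCliffordLike F H par)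
    (β : H → H) (hbij : Function.Bijective β)
    (hadd : ∀ x y : H, β (x + y) = β x + β y)
    (hsmul : ∀ (a : F) (x : H), β (a • x) = a • β x) :
    Preserves F H β par ↔
      Preserves F H β (fun M N : Line F H => LeftPar F H M.1 N.1) := by
  classical
  obtain ⟨⟨hE, hExist⟩, hdich⟩ := hpar
  have hE_L : Equivalence (fun M N : Line F H => LeftPar F H M.1 N.1) :=
    ⟨fun M => leftPar_refl M.1, fun h => leftPar_symm h, fun h1 h2 => leftPar_trans h1 h2⟩
  have hdich_L : ∀ M : Line F H,
      parClass F H (fun M N : Line F H => LeftPar F H M.1 N.1) M = leftClass F H M ∨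
      parClass F H (fun M N : Line F H => LeftPar F H M.1 N.1) M = rightClass F H M :=
    fun M => Or.inl rfl
  -- β as a linear equivalence
  set e : H ≃ₗ[F] H := LinearEquiv.ofBijective
    { toFun := β
      map_add' := hadd
      map_smul' := fun a x => hsmul a x } hbij with hedef
  have hβe : Preserves F H β par ↔ Preserves F H (⇑e) par := Iff.rfl
  have hβe' : Preserves F H β (fun M N : Line F H => LeftPar F H M.1 N.1)
      ↔ Preserves F H (⇑e) (fun M N : Line F H => LeftPar F H M.1 N.1) := Iff.rfl
  have hc : e 1 ≠ 0 := gamma_ne_zero e one_ne_zero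
  set γ : H ≃ₗ[F] H := e.trans (lmulE (F := F) (e 1)⁻¹ (inv_ne_zero hc)) with hγdef
  have hγ1 : γ 1 = 1 := by
    show (e 1)⁻¹ * e 1 = 1
    rw [inv_mul_cancel₀ hc]
  have hγe : ∀ L : Line F H,
      mapLine (lmulE (F := F) (e 1)⁻¹ (inv_ne_zero hc)) (mapLine e L) = mapLine γ L :=
    fun L => mapLine_mapLine _ _ L
  have hcancel : ∀ L : Line F H,
      mapLine (lmulE (F := F) (e 1) hc)
        (mapLine (lmulE (F := F) (e 1)⁻¹ (inv_ne_zero hc)) L) = L := by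
    intro L
    apply line_ext
    rw [lmulLine_coe, lmulLine_coe, image_left_left, mul_inv_cancel₀ hc, image_one_left]
  have hdecompL : ∀ L : Line F H,
      mapLine e L = mapLine (lmulE (F := F) (e 1) hc) (mapLine γ L) := by
    intro L
    rw [← hγe L, hcancel]
  rw [hβe, hβe', preserves_iff_mapLine, preserves_iff_mapLine]
  constructor
  · -- β preserves par ⟹ β preserves the left parallelism
    intro hP
    have hγpres : ∀ M N : Line F H, par M N → par (mapLine γ M) (mapLine γ N) := by
      intro M N h
      have h1 := (hP M N).1 h
      have h2 := lmul_preserves hcenter hdim hE hdich (inv_ne_zero hc) h1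
      rw [hγe M, hγe N] at h2
      exact h2
    have hmul := preserved_implies_mult hcenter hdim hE hdich γ hγ1 hγpres
    have hmulsymm := symm_mult γ hmul
    intro M N
    constructor
    · intro h
      rw [hdecompL M, hdecompL N]
      exact lmul_leftPar hc (mult_preserves_leftPar γ hmul h)
    · intro h
      have h1 := lmul_leftPar (inv_ne_zero hc) h
      rw [hγe M, hγe N] at h1
      have h2 := mult_preserves_leftPar γ.symm hmulsymm h1
      rw [mapLine_symm_cancel, mapLine_symm_cancel] at h2
      exact h2
  · -- β preserves the left parallelism ⟹ β preserves par
    intro hP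
    have hγpresL : ∀ M N : Line F H, LeftPar F H M.1 N.1 →
        LeftPar F H (mapLine γ M).1 (mapLine γ N).1 := by
      intro M N h
      have h1 := (hP M N).1 h
      have h2 := lmul_leftPar (inv_ne_zero hc) h1
      rw [hγe M, hγe N] at h2
      exact h2
    have hmul := preserved_implies_mult hcenter hdim hE_L hdich_L γ hγ1
      (fun M N h => hγpresL M N h)
    have hmulsymm := symm_mult γ hmul
    intro M N
    constructor
    · intro h
      rw [hdecompL M, hdecompL N]
      exact lmul_preserves hcenter hdim hE hdich hc
        (mult_preserves hcenter hdim hE hdich γ hmul h)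
    · intro h
      have h1 := lmul_preserves hcenter hdim hE hdich (inv_ne_zero hc) h
      rw [hγe M, hγe N] at h1
      have h2 := mult_preserves hcenter hdim hE hdich γ.symm hmulsymm h1
      rw [mapLine_symm_cancel, mapLine_symm_cancel] at h2
      exact h2

/-- An `F`-linear bijection of `H` preserves a Clifford-like parallelism `∥` if and
only if it preserves the left Clifford parallelism `∥ℓ`. -/
theorem linear_preserves_iff_preserves_left
    (hcenter : CenterEqF F H) (hdim : Module.finrank F H = 4)
    (par : Line F H → Line F H → Prop) (hpar : IsCliffordLike F H par)
    (β : H → H) (hbij : Function.Bijective β)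
    (hadd : ∀ x y : H, β (x + y) = β x + β y)
    (hsmul : ∀ (a : F) (x : H), β (a • x) = a • β x) :
    Preserves F H β par ↔
      Preserves F H β (fun M N : Line F H => LeftPar F H M.1 N.1) := by
  exact linear_preserves_iff_preserves_left' hcenter hdim par hpar β hbij hadd hsmul
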